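/- arXiv:0904.1361 — 6 statements merged into one kernel-verified Lean document; each statement's English description precedes it below -/
import Mathlib

section
/- Fix α₀, β₀, V, ξ > 0, integers K ≥ 0 and M ≥ 1, observed annual loss counts n₁,…,n_K ∈ ℕ and expert opinions θ₁,…,θ_M > 0. Set ν = α₀ − 1 − Mξ + Σ_{k=1}^K n_k, ω = VK + 1/β₀ and φ = ξ·Σ_{m=1}^M θ_m. Then there exists a constant c > 0 such that for every λ > 0, [λ^{α₀−1} e^{−λ/β₀}/(β₀^{α₀}Γ(α₀))] · ∏_{k=1}^K e^{−Vλ}(Vλ)^{n_k}/n_k! · ∏_{m=1}^M [θ_m^{ξ−1} e^{−θ_m ξ/λ}/((λ/ξ)^ξ Γ(ξ))] = c · λ^ν exp(−ωλ − φ/λ); that is, the posterior density of the Poisson intensity parameter in the Poisson–Gamma–Gamma model is the generalized inverse Gaussian density GIG(ω,φ,ν). -/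
open MeasureTheory ProbabilityTheory Filter

/-- Modified Bessel function of the third kind:
`K_ν(z) = (1/2) ∫₀^∞ u^(ν-1) exp(-z(u+1/u)/2) du`. -/
noncomputable def besselK (ν z : ℝ) : ℝ :=
  (1 / 2) * ∫ u in Set.Ioi (0 : ℝ), u ^ (ν - 1) * Real.exp (-(z * (u + 1 / u)) / 2)

/-- The ratio `R_ν(z) = K_{ν+1}(z) / K_ν(z)`. -/
noncomputable def besselR (ν z : ℝ) : ℝ := besselK (ν + 1) z / besselK ν z

/-- **Poisson–Gamma–Gamma posterior, Theorem 1.**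
The product of the Gamma(α₀,β₀) prior density, the Poisson(Vλ) likelihoods of the
annual counts and the Gamma(ξ, λ/ξ) likelihoods of the expert opinions is, up to a
positive normalizing constant, the GIG(ω,φ,ν) density `λ^ν exp(-ωλ - φ/λ)`. -/
theorem poisson_gamma_gamma_posterior_is_GIG
    (α₀ β₀ V ξ : ℝ) (hα₀ : 0 < α₀) (hβ₀ : 0 < β₀) (hV : 0 < V) (hξ : 0 < ξ)
    (K M : ℕ) (hM : 1 ≤ M) (n : Fin K → ℕ) (θ : Fin M → ℝ) (hθ : ∀ m, 0 < θ m)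
    (ν ω φ : ℝ)
    (hν : ν = α₀ - 1 - M * ξ + ∑ k, (n k : ℝ))
    (hω : ω = V * K + 1 / β₀)
    (hφ : φ = ξ * ∑ m, θ m) :
    ∃ c : ℝ, 0 < c ∧ ∀ lam : ℝ, 0 < lam →
      (lam ^ (α₀ - 1) * Real.exp (-lam / β₀) / (β₀ ^ α₀ * Real.Gamma α₀)) *
        (∏ k, Real.exp (-(V * lam)) * (V * lam) ^ (n k) / ((n k).factorial : ℝ)) *
        (∏ m, θ m ^ (ξ - 1) * Real.exp (-(θ m * ξ) / lam) / ((lam / ξ) ^ ξ * Real.Gamma ξ)) =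
      c * (lam ^ ν * Real.exp (-(ω * lam) - φ / lam)) := by
  subst hν hω hφ
  set N : ℕ := ∑ k, n k with hN
  have hNR : ((N : ℝ)) = ∑ k, ((n k : ℝ)) := by
    simp [hN]
  have hΓα : 0 < Real.Gamma α₀ := Real.Gamma_pos_of_pos hα₀
  have hΓξ : 0 < Real.Gamma ξ := Real.Gamma_pos_of_pos hξ
  have hfact : 0 < ∏ k, ((n k).factorial : ℝ) := by
    apply Finset.prod_pos; intro k _; exact_mod_cast (n k).factorial_pos
  have hΘ : 0 < ∏ m, θ m ^ (ξ - 1) := by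
    apply Finset.prod_pos; intro m _; exact Real.rpow_pos_of_pos (hθ m) _
  refine ⟨(∏ m, θ m ^ (ξ - 1)) * V ^ N * ξ ^ ((M : ℝ) * ξ) /
      (β₀ ^ α₀ * Real.Gamma α₀ * (∏ k, ((n k).factorial : ℝ)) * Real.Gamma ξ ^ M), ?_, ?_⟩
  · apply div_pos
    · apply mul_pos (mul_pos hΘ (pow_pos hV N)) (Real.rpow_pos_of_pos hξ _)
    · apply mul_pos (mul_pos (mul_pos (Real.rpow_pos_of_pos hβ₀ _) hΓα) hfact)
        (pow_pos hΓξ M)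
  intro lam hlam
  have h1 : (∏ k, Real.exp (-(V * lam)) * (V * lam) ^ (n k) / ((n k).factorial : ℝ))
      = Real.exp (-(V * lam)) ^ K * (V * lam) ^ N / ∏ k, ((n k).factorial : ℝ) := by
    rw [Finset.prod_div_distrib, Finset.prod_mul_distrib, Finset.prod_const,
      Finset.prod_pow_eq_pow_sum]
    simp [hN]
  have h2 : (∏ m, θ m ^ (ξ - 1) * Real.exp (-(θ m * ξ) / lam) / ((lam / ξ) ^ ξ * Real.Gamma ξ))
      = (∏ m, θ m ^ (ξ - 1)) * Real.exp (-(ξ * ∑ m, θ m) / lam) /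
        ((lam / ξ) ^ ξ * Real.Gamma ξ) ^ M := by
    rw [Finset.prod_div_distrib, Finset.prod_mul_distrib, Finset.prod_const, ← Real.exp_sum]
    congr 2
    · rw [← Finset.sum_div, Finset.sum_neg_distrib, ← Finset.sum_mul]
      ring
    · simp
  have hβne : β₀ ≠ 0 := ne_of_gt hβ₀
  have hlamne : lam ≠ 0 := ne_of_gt hlam
  have hE : Real.exp (-((V * ↑K + 1 / β₀) * lam) - ξ * (∑ m, θ m) / lam)
      = Real.exp (-lam / β₀) * Real.exp (-(V * lam)) ^ K *
        Real.exp (-(ξ * ∑ m, θ m) / lam) := by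
    rw [show -((V * (K:ℝ) + 1 / β₀) * lam) - ξ * (∑ m, θ m) / lam
        = (-lam / β₀ + (K:ℝ) * (-(V * lam))) + (-(ξ * ∑ m, θ m) / lam) by
      field_simp; ring]
    rw [Real.exp_add, Real.exp_add, Real.exp_nat_mul]
  have hpow : lam ^ (α₀ - 1 - ↑M * ξ + ∑ k, ((n k : ℝ)))
      = lam ^ (α₀ - 1) * lam ^ ((N : ℝ)) / lam ^ ((M : ℝ) * ξ) := by
    rw [← hNR, show α₀ - 1 - ↑M * ξ + (N:ℝ) = (α₀ - 1) + (N:ℝ) - (M:ℝ) * ξ by ring,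
      Real.rpow_sub hlam, Real.rpow_add hlam]
  have hlamN : lam ^ ((N : ℝ)) = lam ^ N := Real.rpow_natCast lam N
  have hVlam : (V * lam) ^ N = V ^ N * lam ^ N := mul_pow V lam N
  have hdivp : (lam / ξ) ^ ξ = lam ^ ξ / ξ ^ ξ := Real.div_rpow hlam.le hξ.le ξ
  have hMξ : lam ^ ((M : ℝ) * ξ) = (lam ^ ξ) ^ M := by
    rw [← Real.rpow_natCast (lam ^ ξ) M, ← Real.rpow_mul hlam.le]
    ring_nf
  have hMξ' : ξ ^ ((M : ℝ) * ξ) = (ξ ^ ξ) ^ M := by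
    rw [← Real.rpow_natCast (ξ ^ ξ) M, ← Real.rpow_mul hξ.le]
    ring_nf
  rw [h1, h2, hE, hpow, hlamN, hVlam, hdivp, hMξ, hMξ']
  have hlamξ : (0:ℝ) < lam ^ ξ := Real.rpow_pos_of_pos hlam _
  have hξξ : (0:ℝ) < ξ ^ ξ := Real.rpow_pos_of_pos hξ _
  have hβα : (0:ℝ) < β₀ ^ α₀ := Real.rpow_pos_of_pos hβ₀ _
  field_simp
  rw [← mul_pow (lam ^ ξ * Real.Gamma ξ / ξ ^ ξ), div_mul_cancel₀ _ hξξ.ne']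
  ring
end

section
/- For all a > 0 and b > 0, the ratio R_{bν}(a√ν) = K_{bν+1}(a√ν)/K_{bν}(a√ν) satisfies R_{bν}(a√ν) ∼ 2b√ν/a as ν → ∞, i.e. lim_{ν→∞} R_{bν}(a√ν) · a/(2b√ν) = 1. -/
open MeasureTheory ProbabilityTheory Filter

open Set Real Filter MeasureTheory


lemma besselAux_contOn {c z : ℝ} :
    ContinuousOn (fun u : ℝ => u ^ c * Real.exp (-(z * (u + 1 / u)) / 2)) (Set.Ioi 0) := by
  intro u hu
  have hu0 : (u:ℝ) ≠ 0 := ne_of_gt hu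
  apply ContinuousAt.continuousWithinAt
  exact (Real.continuousAt_rpow_const u c (Or.inl hu0)).mul
    ((Real.continuous_exp.continuousAt).comp <| by
      exact (((continuousAt_id.add ((continuousAt_const (y := (1:ℝ))).div continuousAt_id hu0)).const_mul z).neg.div_const 2))

lemma besselAux_integrableOn {c z : ℝ} (hz : 0 < z) :
    IntegrableOn (fun u : ℝ => u ^ c * Real.exp (-(z * (u + 1 / u)) / 2)) (Set.Ioi 0) := by
  set f : ℝ → ℝ := fun u => u ^ c * Real.exp (-(z * (u + 1 / u)) / 2) with hf
  have hmeas : ∀ s : Set ℝ, s ⊆ Set.Ioi 0 → MeasurableSet s →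
      AEStronglyMeasurable f (volume.restrict s) := fun s hs hms =>
    (besselAux_contOn.mono hs).aestronglyMeasurable hms
  have h1 : IntegrableOn f (Set.Ioc 0 1) := by
    obtain ⟨n, hn⟩ := exists_nat_ge (-c)
    refine Integrable.mono' (g := fun _ => (n.factorial : ℝ) * (2 / z) ^ n)
      (integrableOn_const measure_Ioc_lt_top.ne)
      (hmeas _ (fun x hx => hx.1) measurableSet_Ioc) ?_
    filter_upwards [ae_restrict_mem measurableSet_Ioc] with u hu
    have hu0 : 0 < u := hu.1
    have hE1 : Real.exp (-(z * (u + 1 / u)) / 2) ≤ Real.exp (-(z / (2 * u))) := by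
      apply Real.exp_le_exp.2
      rw [div_le_iff₀ (by norm_num : (0:ℝ) < 2)] at *
      have : 0 ≤ z * u := le_of_lt (mul_pos hz hu0)
      field_simp
      nlinarith
    have hE2 : Real.exp (-(z / (2 * u))) ≤ (n.factorial : ℝ) * (2 * u / z) ^ n := by
      have hxpos : 0 < z / (2 * u) := by positivity
      have key := Real.pow_div_factorial_le_exp _ hxpos.le n
      have h0 : (0:ℝ) < (z / (2 * u)) ^ n / n.factorial := by positivity
      rw [Real.exp_neg]
      calc (Real.exp (z / (2 * u)))⁻¹ ≤ ((z / (2 * u)) ^ n / n.factorial)⁻¹ :=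
            inv_anti₀ h0 key
        _ = (n.factorial : ℝ) * (2 * u / z) ^ n := by
            rw [inv_div, div_eq_mul_inv, ← inv_pow, inv_div]
    have hb : f u ≤ (n.factorial : ℝ) * (2 / z) ^ n := by
      have h3 : f u ≤ u ^ c * ((n.factorial : ℝ) * (2 * u / z) ^ n) := by
        apply mul_le_mul_of_nonneg_left (le_trans hE1 hE2) (Real.rpow_nonneg hu0.le c)
      have h4 : u ^ c * ((n.factorial : ℝ) * (2 * u / z) ^ n)
          = (n.factorial : ℝ) * (2 / z) ^ n * u ^ (c + n) := by
        rw [Real.rpow_add hu0, Real.rpow_natCast]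
        have : (2 * u / z) ^ n = (2/z)^n * u ^ n := by
          rw [← mul_pow]; ring_nf
        rw [this]; ring
      have h5 : u ^ (c + (n:ℝ)) ≤ 1 :=
        Real.rpow_le_one hu0.le hu.2 (by linarith)
      calc f u ≤ (n.factorial : ℝ) * (2 / z) ^ n * u ^ (c + n) := by rw [← h4]; exact h3
        _ ≤ (n.factorial : ℝ) * (2 / z) ^ n * 1 := by
            apply mul_le_mul_of_nonneg_left h5 (by positivity)
        _ = _ := mul_one _
    have hnn : 0 ≤ f u := by
      apply mul_nonneg (Real.rpow_nonneg hu0.le c) (Real.exp_pos _).le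
    rw [Real.norm_eq_abs, abs_of_nonneg hnn]; exact hb
  have h2 : IntegrableOn f (Set.Ioi 1) := by
    set m := max c 0 with hm
    have hg : IntegrableOn (fun u : ℝ => u ^ m * Real.exp (-(z/2) * u)) (Set.Ioi 0) := by
      have := integrableOn_rpow_mul_exp_neg_mul_rpow (p := 1) (s := m) (b := z/2)
        (lt_of_lt_of_le (by norm_num) (le_max_right c 0) : (-1:ℝ) < m) one_pos (by positivity)
      simpa using this
    refine Integrable.mono' (hg.mono_set (Set.Ioi_subset_Ioi zero_le_one))
      (hmeas _ (Set.Ioi_subset_Ioi zero_le_one) measurableSet_Ioi) ?_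
    filter_upwards [ae_restrict_mem measurableSet_Ioi] with u hu
    have hu1 : (1:ℝ) ≤ u := hu.le
    have hu0 : 0 < u := lt_of_lt_of_le one_pos hu1
    have hnn : 0 ≤ f u := mul_nonneg (Real.rpow_nonneg hu0.le c) (Real.exp_pos _).le
    rw [Real.norm_eq_abs, abs_of_nonneg hnn]
    apply mul_le_mul
    · exact Real.rpow_le_rpow_of_exponent_le hu1 (le_max_left _ _)
    · apply Real.exp_le_exp.2
      have h1u : 0 ≤ 1 / u := by positivity
      nlinarith
    · exact (Real.exp_pos _).le
    · exact Real.rpow_nonneg hu0.le m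
  have : Set.Ioi (0:ℝ) = Set.Ioc 0 1 ∪ Set.Ioi 1 := (Set.Ioc_union_Ioi_eq_Ioi zero_le_one).symm
  rw [IntegrableOn, this]
  exact h1.union h2

lemma besselK_pos {ν z : ℝ} (hz : 0 < z) : 0 < besselK ν z := by
  rw [besselK]
  have h : 0 < ∫ u in Set.Ioi (0:ℝ), u ^ (ν - 1) * Real.exp (-(z * (u + 1 / u)) / 2) := by
    rw [setIntegral_pos_iff_support_of_nonneg_ae ?_ (besselAux_integrableOn hz)]
    · refine lt_of_lt_of_le (b := volume (Set.Ioi (0:ℝ))) (by simp [Real.volume_Ioi]) (measure_mono ?_)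
      intro x hx
      refine ⟨?_, hx⟩
      simp only [Function.mem_support]
      have : (0:ℝ) < x := hx
      positivity
    · filter_upwards [ae_restrict_mem measurableSet_Ioi] with u hu
      have : (0:ℝ) < u := hu
      positivity
  linarith

lemma besselK_rw (ν z : ℝ) :
    besselK ν z = (1/2) * ∫ u in Set.Ioi (0:ℝ), u ^ (ν - 1) * Real.exp (-(z * (u + u⁻¹)) / 2) := by
  simp [besselK, one_div]

lemma besselK_recurrence {ν z : ℝ} (hz : 0 < z) (hν : 1 ≤ ν) :
    z * besselK (ν + 1) z = 2 * ν * besselK ν z + z * besselK (ν - 1) z := by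
  set E : ℝ → ℝ := fun u => Real.exp (-(z * (u + u⁻¹)) / 2) with hE
  set F : ℝ → ℝ := fun u => u ^ ν * E u with hF
  set F' : ℝ → ℝ := fun u =>
    ν * (u ^ (ν - 1) * E u) - z / 2 * (u ^ ν * E u) + z / 2 * (u ^ (ν - 2) * E u) with hF'
  have hint : ∀ c : ℝ, IntegrableOn (fun u : ℝ => u ^ c * E u) (Set.Ioi 0) := by
    intro c
    have := besselAux_integrableOn (c := c) hz
    simpa [one_div] using this
  -- derivative
  have hderiv : ∀ u ∈ Set.Ioi (0:ℝ), HasDerivAt F (F' u) u := by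
    intro u hu
    have hu0 : (0:ℝ) < u := hu
    have h1 : HasDerivAt (fun u : ℝ => u ^ ν) (ν * u ^ (ν - 1)) u := by
      simpa using Real.hasDerivAt_rpow_const (x := u) (p := ν) (Or.inl hu0.ne')
    have hg : HasDerivAt (fun u : ℝ => -(z * (u + u⁻¹)) / 2)
        (-(z * (1 + -(u ^ 2)⁻¹)) / 2) u := by
      exact (((hasDerivAt_id u).add (hasDerivAt_inv hu0.ne')).const_mul z).neg.div_const 2
    have hEd : HasDerivAt E (E u * (-(z * (1 + -(u ^ 2)⁻¹)) / 2)) u := by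
      simpa [hE, mul_comm] using hg.exp
    have := h1.mul hEd
    refine this.congr_deriv ?_
    have hupow : u ^ (ν - 2) = u ^ ν * (u ^ 2)⁻¹ := by
      rw [show ν - 2 = ν + (-2 : ℝ) by ring, Real.rpow_add hu0, Real.rpow_neg hu0.le,
        show ((2:ℝ)) = ((2:ℕ):ℝ) by norm_num, Real.rpow_natCast]
    rw [hF']
    simp only [hupow]
    ring
  -- continuity at 0
  have hF0 : F 0 = 0 := by
    have : (0:ℝ) ^ ν = 0 := Real.zero_rpow (by linarith : ν ≠ 0)
    simp [hF, this]
  have hcont : ContinuousWithinAt F (Set.Ici 0) 0 := by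
    rw [ContinuousWithinAt, hF0]
    have hbound : ∀ u ∈ Set.Ici (0:ℝ), F u ≤ u ^ ν ∧ 0 ≤ F u := by
      intro u hu
      rcases eq_or_lt_of_le (Set.mem_Ici.mp hu : (0:ℝ) ≤ u) with h | h
      · refine ⟨?_, ?_⟩
        · rw [← h, hF0]; exact Real.rpow_nonneg le_rfl ν
        · rw [← h, hF0]
      · constructor
        · have hE1 : E u ≤ 1 := by
            rw [hE]
            simp only []
            rw [show (1:ℝ) = Real.exp 0 by simp]
            apply Real.exp_le_exp.2
            have : 0 < u + u⁻¹ := by positivity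
            have : 0 ≤ z * (u + u⁻¹) := by positivity
            linarith
          calc F u = u ^ ν * E u := rfl
            _ ≤ u ^ ν * 1 := mul_le_mul_of_nonneg_left hE1 (Real.rpow_nonneg h.le ν)
            _ = u ^ ν := mul_one _
        · exact mul_nonneg (Real.rpow_nonneg h.le ν) (Real.exp_pos _).le
    have hrpow : Tendsto (fun u : ℝ => u ^ ν) (nhdsWithin 0 (Set.Ici 0)) (nhds 0) := by
      have : ContinuousAt (fun u : ℝ => u ^ ν) 0 :=
        Real.continuousAt_rpow_const 0 ν (Or.inr (by linarith))
      have h0 : (0:ℝ) ^ ν = 0 := Real.zero_rpow (by linarith : ν ≠ 0)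
      have h2 : Tendsto (fun u : ℝ => u ^ ν) (nhdsWithin 0 (Set.Ici 0))
          (nhds ((fun u : ℝ => u ^ ν) 0)) := this.continuousWithinAt (s := Set.Ici 0)
      simp only [h0] at h2
      exact h2
    refine tendsto_of_tendsto_of_tendsto_of_le_of_le' tendsto_const_nhds hrpow ?_ ?_
    · filter_upwards [self_mem_nhdsWithin] with u hu using (hbound u hu).2
    · filter_upwards [self_mem_nhdsWithin] with u hu using (hbound u hu).1
  -- limit at infinity
  have htop : Tendsto F atTop (nhds 0) := by
    refine squeeze_zero_norm' (a := fun u : ℝ => u ^ ν * Real.exp (-(z/2) * u)) ?_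
      (tendsto_rpow_mul_exp_neg_mul_atTop_nhds_zero ν (z/2) (by positivity))
    filter_upwards [eventually_gt_atTop (0:ℝ)] with u hu
    have hnn : 0 ≤ F u := mul_nonneg (Real.rpow_nonneg hu.le ν) (Real.exp_pos _).le
    rw [Real.norm_eq_abs, abs_of_nonneg hnn]
    apply mul_le_mul_of_nonneg_left _ (Real.rpow_nonneg hu.le ν)
    apply Real.exp_le_exp.2
    have : 0 ≤ u⁻¹ := by positivity
    nlinarith
  -- integrability of F'
  have hF'int : IntegrableOn F' (Set.Ioi 0) := by
    apply Integrable.add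
    apply Integrable.sub
    · exact (hint (ν - 1)).const_mul ν
    · exact (hint ν).const_mul (z/2)
    · exact (hint (ν - 2)).const_mul (z/2)
  have key : ∫ u in Set.Ioi (0:ℝ), F' u = 0 := by
    rw [integral_Ioi_of_hasDerivAt_of_tendsto hcont hderiv hF'int htop, hF0, sub_zero]
  -- expand
  have hsplit : ∫ u in Set.Ioi (0:ℝ), F' u
      = ν * (∫ u in Set.Ioi (0:ℝ), u ^ (ν - 1) * E u)
        - z / 2 * (∫ u in Set.Ioi (0:ℝ), u ^ ν * E u)
        + z / 2 * (∫ u in Set.Ioi (0:ℝ), u ^ (ν - 2) * E u) := by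
    have h1 := (hint (ν-1)).const_mul ν
    have h2 := (hint ν).const_mul (z/2)
    have h3 := (hint (ν-2)).const_mul (z/2)
    calc ∫ u in Set.Ioi (0:ℝ), F' u
        = (∫ u in Set.Ioi (0:ℝ), (ν * (u ^ (ν - 1) * E u) - z / 2 * (u ^ ν * E u)))
          + ∫ u in Set.Ioi (0:ℝ), z / 2 * (u ^ (ν - 2) * E u) := integral_add (h1.sub h2) h3
      _ = (∫ u in Set.Ioi (0:ℝ), ν * (u ^ (ν - 1) * E u))
          - (∫ u in Set.Ioi (0:ℝ), z / 2 * (u ^ ν * E u))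
          + ∫ u in Set.Ioi (0:ℝ), z / 2 * (u ^ (ν - 2) * E u) := by
            rw [integral_sub h1 h2]
      _ = _ := by rw [integral_const_mul, integral_const_mul, integral_const_mul]
  have e1 : besselK ν z = 1/2 * ∫ u in Set.Ioi (0:ℝ), u ^ (ν - 1) * E u := besselK_rw ν z
  have e2 : besselK (ν + 1) z = 1/2 * ∫ u in Set.Ioi (0:ℝ), u ^ ν * E u := by
    rw [besselK_rw]; norm_num <;> rfl
  have e3 : besselK (ν - 1) z = 1/2 * ∫ u in Set.Ioi (0:ℝ), u ^ (ν - 2) * E u := by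
    rw [besselK_rw, show ν - 1 - 1 = ν - 2 by ring]
  rw [hsplit] at key
  rw [e1, e2, e3]
  linear_combination -key

lemma besselR_lower {ν z : ℝ} (hz : 0 < z) (hν : 1 ≤ ν) : 2 * ν / z ≤ besselR ν z := by
  have hK := besselK_pos (ν := ν) hz
  have hK1 := besselK_pos (ν := ν - 1) hz
  have hA := besselK_recurrence hz hν
  rw [besselR, div_le_div_iff₀ hz hK]
  nlinarith [mul_pos hz hK1]

lemma besselR_upper {ν z : ℝ} (hz : 0 < z) (hν : 2 ≤ ν) :
    besselR ν z ≤ 2 * ν / z + z / (2 * (ν - 1)) := by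
  have hK := besselK_pos (ν := ν) hz
  have hK1 := besselK_pos (ν := ν - 1) hz
  have hK2 := besselK_pos (ν := ν - 2) hz
  have hA := besselK_recurrence hz (by linarith : 1 ≤ ν)
  have hB := besselK_recurrence (ν := ν - 1) hz (by linarith)
  rw [show ν - 1 + 1 = ν by ring, show ν - 1 - 1 = ν - 2 by ring] at hB
  have hν1 : (0:ℝ) < ν - 1 := by linarith
  have hB' : z ^ 2 * besselK ν z - 2 * (ν - 1) * z * besselK (ν - 1) z
      = z ^ 2 * besselK (ν - 2) z := by linear_combination z * hB
  have h3 : 2 * (ν - 1) * z * besselK (ν - 1) z ≤ z ^ 2 * besselK ν z := by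
    nlinarith [mul_pos (mul_pos hz hz) hK2]
  have hA' : 2 * (ν - 1) * z * besselK (ν + 1) z
      = 4 * ν * (ν - 1) * besselK ν z + 2 * (ν - 1) * z * besselK (ν - 1) z := by
    linear_combination (2 * (ν - 1)) * hA
  have hgoal : 2 * (ν - 1) * z * besselK (ν + 1) z
      ≤ (4 * ν * (ν - 1) + z ^ 2) * besselK ν z := by nlinarith
  rw [besselR, div_le_iff₀ hK, div_add_div _ _ hz.ne' (by positivity : (2 * (ν - 1)) ≠ 0)]
  rw [div_mul_eq_mul_div, le_div_iff₀ (by positivity : (0:ℝ) < z * (2 * (ν - 1)))]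
  nlinarith [hgoal, hK]

/-- **Lemma 1: asymptotics of the Bessel ratio.**
For all `a, b > 0`, `R_{bν}(a√ν) ∼ 2b√ν / a` as `ν → ∞`. -/
theorem besselR_asymptotic (a b : ℝ) (ha : 0 < a) (hb : 0 < b) :
    Tendsto (fun ν : ℝ =>
        besselR (b * ν) (a * Real.sqrt ν) * a / (2 * b * Real.sqrt ν))
      atTop (nhds 1) := by
  have hup : Tendsto (fun ν : ℝ => 1 + a ^ 2 / (4 * b * (b * ν - 1))) atTop (nhds 1) := by
    have h1 : Tendsto (fun ν : ℝ => 4 * b * (b * ν - 1)) atTop atTop := by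
      have h2 : Tendsto (fun ν : ℝ => 4 * b * b * ν + -(4 * b)) atTop atTop :=
        tendsto_atTop_add_const_right _ _
          ((tendsto_id (α := ℝ)).const_mul_atTop (by positivity : (0:ℝ) < 4 * b * b))
      exact h2.congr (fun ν => by ring)
    have h3 : Tendsto (fun ν : ℝ => a ^ 2 / (4 * b * (b * ν - 1))) atTop (nhds 0) :=
      Tendsto.div_atTop tendsto_const_nhds h1
    simpa using (tendsto_const_nhds (x := (1:ℝ)) (f := atTop)).add h3
  refine tendsto_of_tendsto_of_tendsto_of_le_of_le'
    (tendsto_const_nhds (x := (1:ℝ))) hup ?_ ?_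
  · filter_upwards [eventually_ge_atTop (max 1 (2 / b))] with ν hν
    have hν1 : (1:ℝ) ≤ ν := le_trans (le_max_left _ _) hν
    have hbν : (2:ℝ) ≤ b * ν := by
      have h := le_trans (le_max_right _ _) hν
      calc (2:ℝ) = b * (2 / b) := by field_simp
        _ ≤ b * ν := by gcongr
    have hν0 : (0:ℝ) < ν := by linarith
    set s := Real.sqrt ν with hs
    have hspos : 0 < s := Real.sqrt_pos.2 hν0
    have hss : s * s = ν := Real.mul_self_sqrt hν0.le
    have hz : 0 < a * s := by positivity
    have hlow := besselR_lower (ν := b * ν) (z := a * s) hz (by linarith)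
    have heq : 2 * (b * ν) / (a * s) * a / (2 * b * s) = 1 := by
      rw [← hss]
      field_simp
    calc (1:ℝ) = 2 * (b * ν) / (a * s) * a / (2 * b * s) := heq.symm
      _ ≤ besselR (b * ν) (a * s) * a / (2 * b * s) := by gcongr
  · filter_upwards [eventually_ge_atTop (max 1 (2 / b))] with ν hν
    have hν1 : (1:ℝ) ≤ ν := le_trans (le_max_left _ _) hν
    have hbν : (2:ℝ) ≤ b * ν := by
      have h := le_trans (le_max_right _ _) hν
      calc (2:ℝ) = b * (2 / b) := by field_simp
        _ ≤ b * ν := by gcongr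
    have hν0 : (0:ℝ) < ν := by linarith
    set s := Real.sqrt ν with hs
    have hspos : 0 < s := Real.sqrt_pos.2 hν0
    have hss : s * s = ν := Real.mul_self_sqrt hν0.le
    have hz : 0 < a * s := by positivity
    have hupb := besselR_upper (ν := b * ν) (z := a * s) hz hbν
    have heq : (2 * (b * ν) / (a * s) + a * s / (2 * (b * ν - 1))) * a / (2 * b * s)
        = 1 + a ^ 2 / (4 * b * (b * ν - 1)) := by
      have h1 : b * ν - 1 ≠ 0 := ne_of_gt (by linarith : (0:ℝ) < b * ν - 1)
      rw [← hss]
      have h2 : b * (s * s) - 1 ≠ 0 := by rw [hss]; exact h1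
      field_simp
      ring
    calc besselR (b * ν) (a * s) * a / (2 * b * s)
        ≤ (2 * (b * ν) / (a * s) + a * s / (2 * (b * ν - 1))) * a / (2 * b * s) := by gcongr
      _ = 1 + a ^ 2 / (4 * b * (b * ν - 1)) := heq
end

section
/- Fix λ > 0, V > 0, α₀ > 0, β₀ > 0, ξ > 0, an integer M ≥ 1 and expert opinions θ₁,…,θ_M > 0, and set φ = ξ·Σ_{m=1}^M θ_m. Let (N_k)_{k≥1} be a sequence of i.i.d. random variables on a probability space, each with the Poisson distribution of mean Vλ. For K ≥ 1 put ν_K = α₀ − 1 − Mξ + Σ_{k=1}^K N_k and ω_K = VK + 1/β₀. Then almost surely, the posterior mean √(φ/ω_K) · R_{ν_K+1}(2√(ω_K φ)) converges to λ as K → ∞. -/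
open MeasureTheory ProbabilityTheory Filter

section BesselAuxSection
open Set Real
open scoped ENNReal NNReal

namespace BesselAux

noncomputable def bf (ν z u : ℝ) : ℝ := u ^ (ν - 1) * Real.exp (-(z * (u + 1 / u)) / 2)

lemma bf_nonneg {ν z : ℝ} {u : ℝ} (hu : 0 ≤ u) : 0 ≤ bf ν z u :=
  mul_nonneg (Real.rpow_nonneg hu _) (Real.exp_pos _).le

lemma bf_pos {ν z : ℝ} {u : ℝ} (hu : 0 < u) : 0 < bf ν z u :=
  mul_pos (Real.rpow_pos_of_pos hu _) (Real.exp_pos _)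

lemma besselK_eq (ν z : ℝ) : besselK ν z = (1 / 2) * ∫ u in Set.Ioi (0:ℝ), bf ν z u := rfl

lemma bf_continuousOn (ν z : ℝ) : ContinuousOn (bf ν z) (Set.Ioi 0) := by
  apply ContinuousOn.mul
  · exact fun x hx => (Real.continuousAt_rpow_const x _ (Or.inl (ne_of_gt hx))).continuousWithinAt
  · apply ContinuousOn.rexp
    apply ContinuousOn.div_const
    apply ContinuousOn.neg
    exact continuousOn_const.mul (continuousOn_id.add
      (continuousOn_const.div continuousOn_id (fun x hx => ne_of_gt hx)))

/-- bound on (0,1] -/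
lemma bf_le_const {ν z : ℝ} (hz : 0 < z) {u : ℝ} (hu : 0 < u) (hu1 : u ≤ 1) :
    bf ν z u ≤ (Nat.factorial ⌈max 0 (1 - ν)⌉₊ : ℝ) * (2 / z) ^ (⌈max 0 (1 - ν)⌉₊) := by
  set m : ℕ := ⌈max 0 (1 - ν)⌉₊ with hm
  set t : ℝ := u⁻¹ with htdef
  have ht1 : 1 ≤ t := (one_le_inv₀ hu).mpr hu1
  have ht0 : 0 < t := lt_of_lt_of_le one_pos ht1
  have h1 : t ^ (1 - ν) = u ^ (ν - 1) := by
    rw [htdef, Real.inv_rpow hu.le, ← Real.rpow_neg hu.le]; ring_nf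
  have key : t ^ m ≤ (Nat.factorial m : ℝ) * (2 / z) ^ m * Real.exp (z / 2 * t) := by
    have h := Real.pow_div_factorial_le_exp (x := z / 2 * t)
      (mul_nonneg (by positivity) ht0.le) m
    rw [div_le_iff₀ (by positivity)] at h
    have e : (2 / z) ^ m * (z / 2 * t) ^ m = t ^ m := by
      rw [← mul_pow]
      congr 1
      field_simp
    calc t ^ m = (2 / z) ^ m * (z / 2 * t) ^ m := e.symm
      _ ≤ (2 / z) ^ m * (Real.exp (z / 2 * t) * (Nat.factorial m : ℝ)) := by
          apply mul_le_mul_of_nonneg_left h (by positivity)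
      _ = (Nat.factorial m : ℝ) * (2 / z) ^ m * Real.exp (z / 2 * t) := by ring
  have step1 : bf ν z u ≤ t ^ m * Real.exp (-(z / 2 * t)) := by
    unfold bf
    have e2 : Real.exp (-(z * (u + 1 / u)) / 2) ≤ Real.exp (-(z / 2 * t)) := by
      apply Real.exp_le_exp.mpr
      rw [htdef, one_div]
      nlinarith [hu.le, mul_nonneg hz.le hu.le]
    calc u ^ (ν - 1) * Real.exp (-(z * (u + 1 / u)) / 2)
        ≤ u ^ (ν - 1) * Real.exp (-(z / 2 * t)) := by
          apply mul_le_mul_of_nonneg_left e2 (Real.rpow_nonneg hu.le _)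
      _ = t ^ (1 - ν) * Real.exp (-(z / 2 * t)) := by rw [h1]
      _ ≤ t ^ (m : ℝ) * Real.exp (-(z / 2 * t)) := by
          apply mul_le_mul_of_nonneg_right _ (Real.exp_pos _).le
          apply Real.rpow_le_rpow_of_exponent_le ht1
          exact le_trans (le_max_right _ _) (Nat.le_ceil _)
      _ = t ^ m * Real.exp (-(z / 2 * t)) := by rw [Real.rpow_natCast]
  refine step1.trans ?_
  calc t ^ m * Real.exp (-(z / 2 * t))
      ≤ ((Nat.factorial m : ℝ) * (2 / z) ^ m * Real.exp (z / 2 * t)) * Real.exp (-(z / 2 * t)) :=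
        mul_le_mul_of_nonneg_right key (Real.exp_pos _).le
    _ = (Nat.factorial m : ℝ) * (2 / z) ^ m := by
        rw [mul_assoc, ← Real.exp_add]
        simp

lemma bf_integrableOn {ν z : ℝ} (hz : 0 < z) : IntegrableOn (bf ν z) (Set.Ioi 0) := by
  have hmeas : AEStronglyMeasurable (bf ν z) (volume.restrict (Set.Ioi (0:ℝ))) :=
    (bf_continuousOn ν z).aestronglyMeasurable measurableSet_Ioi
  have hsplit : Set.Ioc (0:ℝ) 1 ∪ Set.Ioi 1 = Set.Ioi 0 := Set.Ioc_union_Ioi_eq_Ioi zero_le_one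
  rw [← hsplit]
  apply IntegrableOn.union
  · -- bounded on (0,1]
    apply Integrable.mono' (g := fun _ : ℝ =>
      (Nat.factorial ⌈max 0 (1 - ν)⌉₊ : ℝ) * (2 / z) ^ (⌈max 0 (1 - ν)⌉₊))
      (integrableOn_const measure_Ioc_lt_top.ne)
    · exact hmeas.mono_set (Set.Ioc_subset_Ioi_self.trans (subset_refl _))
    · filter_upwards [ae_restrict_mem measurableSet_Ioc] with u hu
      rw [Real.norm_eq_abs, abs_of_nonneg (bf_nonneg hu.1.le)]
      exact bf_le_const hz hu.1 hu.2
  · -- tail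
    set s : ℝ := max (ν - 1) 0 with hs
    have hint : IntegrableOn (fun x : ℝ => x ^ s * Real.exp (-(z/2) * x)) (Set.Ioi 0) := by
      have := integrableOn_rpow_mul_exp_neg_mul_rpow (s := s) (p := 1) (b := z/2)
        (lt_of_lt_of_le neg_one_lt_zero (le_max_right _ _)) zero_lt_one (by positivity)
      simpa using this
    apply Integrable.mono' (hint.mono_set (Set.Ioi_subset_Ioi zero_le_one))
    · exact hmeas.mono_set (Set.Ioi_subset_Ioi zero_le_one)
    · filter_upwards [ae_restrict_mem measurableSet_Ioi] with u hu
      have hu1 : (1:ℝ) ≤ u := le_of_lt hu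
      have hu0 : (0:ℝ) < u := lt_of_lt_of_le one_pos hu1
      rw [Real.norm_eq_abs, abs_of_nonneg (bf_nonneg hu0.le)]
      unfold bf
      have e1 : u ^ (ν - 1) ≤ u ^ s :=
        Real.rpow_le_rpow_of_exponent_le hu1 (le_max_left _ _)
      have e2 : Real.exp (-(z * (u + 1 / u)) / 2) ≤ Real.exp (-(z/2) * u) := by
        apply Real.exp_le_exp.mpr
        have : 0 ≤ z * (1 / u) := by positivity
        nlinarith
      exact mul_le_mul e1 e2 (Real.exp_pos _).le (Real.rpow_nonneg hu0.le _)


lemma besselK_pos {ν z : ℝ} (hz : 0 < z) : 0 < besselK ν z := by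
  rw [besselK_eq]
  apply mul_pos one_half_pos
  rw [setIntegral_pos_iff_support_of_nonneg_ae]
  · have hsub : Set.Ioi (0:ℝ) ⊆ Function.support (bf ν z) ∩ Set.Ioi 0 := by
      intro x hx
      exact ⟨ne_of_gt (bf_pos hx), hx⟩
    calc (0:ℝ≥0∞) < volume (Set.Ioi (0:ℝ)) := by simp
      _ ≤ volume (Function.support (bf ν z) ∩ Set.Ioi 0) := measure_mono hsub
  · filter_upwards [ae_restrict_mem measurableSet_Ioi] with u hu
    exact (bf_pos hu).le
  · exact bf_integrableOn hz

/-- reflection: K_{-ν} = K_ν -/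
lemma besselK_neg (ν z : ℝ) : besselK (-ν) z = besselK ν z := by
  rw [besselK_eq, besselK_eq]
  congr 1
  have := MeasureTheory.integral_comp_rpow_Ioi (bf ν z) (p := (-1:ℝ)) (by norm_num)
  rw [← this]
  apply setIntegral_congr_fun measurableSet_Ioi
  intro x hx
  have hx0 : (0:ℝ) < x := hx
  simp only [smul_eq_mul]
  rw [Real.rpow_neg_one x]
  unfold bf
  have e1 : (x⁻¹) ^ (ν - 1) = x ^ (1 - ν) := by
    rw [Real.inv_rpow hx0.le, ← Real.rpow_neg hx0.le]; ring_nf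
  have e2 : (1:ℝ) / x⁻¹ = x := by field_simp
  have e3 : |(-1:ℝ)| * x ^ ((-1:ℝ) - 1) = x ^ (-2 : ℝ) := by
    rw [abs_neg, abs_one, one_mul]; norm_num
  rw [e1, e2, e3, ← mul_assoc, ← Real.rpow_add hx0]
  have e4 : (-2) + (1 - ν) = -ν - 1 := by ring
  rw [e4]
  ring_nf

/-- `u^a + u^{-a}` is monotone in `a ≥ 0`, case `1 ≤ u`. -/
lemma cosh_mono_aux {u a b : ℝ} (hu : 1 ≤ u) (ha : 0 ≤ a) (hab : a ≤ b) :
    u ^ a + u ^ (-a) ≤ u ^ b + u ^ (-b) := by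
  have hu0 : (0:ℝ) < u := lt_of_lt_of_le one_pos hu
  have h1 : u ^ a ≤ u ^ b := Real.rpow_le_rpow_of_exponent_le hu hab
  have h2 : u ^ (-a) - u ^ (-b) = (u ^ b - u ^ a) * u ^ (-(a+b)) := by
    rw [mul_comm, mul_sub, ← Real.rpow_add hu0, ← Real.rpow_add hu0]
    ring_nf
  have h3 : u ^ (-(a+b)) ≤ 1 :=
    Real.rpow_le_one_of_one_le_of_nonpos hu (by linarith)
  nlinarith [Real.rpow_nonneg hu0.le b, Real.rpow_nonneg hu0.le a]

lemma cosh_mono {u a b : ℝ} (hu : 0 < u) (ha : 0 ≤ a) (hab : a ≤ b) :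
    u ^ a + u ^ (-a) ≤ u ^ b + u ^ (-b) := by
  rcases le_or_gt 1 u with h | h
  · exact cosh_mono_aux h ha hab
  · have hu1 : 1 ≤ u⁻¹ := (one_le_inv₀ hu).mpr h.le
    have := cosh_mono_aux hu1 ha hab
    rw [Real.inv_rpow hu.le, Real.inv_rpow hu.le, Real.inv_rpow hu.le, Real.inv_rpow hu.le,
      ← Real.rpow_neg hu.le, ← Real.rpow_neg hu.le, ← Real.rpow_neg hu.le,
      ← Real.rpow_neg hu.le] at this
    simp only [neg_neg] at this
    linarith

/-- monotonicity of `besselK` in the order for nonnegative indices -/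
lemma besselK_mono {a b z : ℝ} (hz : 0 < z) (ha : 0 ≤ a) (hab : a ≤ b) :
    besselK a z ≤ besselK b z := by
  have key : ∀ c : ℝ, besselK c z =
      (1/4) * ∫ u in Set.Ioi (0:ℝ), (bf c z u + bf (-c) z u) := by
    intro c
    rw [integral_add (bf_integrableOn hz) (bf_integrableOn hz)]
    have h2 := besselK_neg c z
    rw [besselK_eq, besselK_eq] at *
    linarith [h2]
  rw [key a, key b]
  apply mul_le_mul_of_nonneg_left _ (by norm_num)
  apply setIntegral_mono_on
    ((bf_integrableOn hz).add (bf_integrableOn hz))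
    ((bf_integrableOn hz).add (bf_integrableOn hz)) measurableSet_Ioi
  intro u hu
  have hu0 : (0:ℝ) < u := hu
  unfold bf
  have e : ∀ c : ℝ, u ^ (c - 1) + u ^ (-c - 1) = (u ^ c + u ^ (-c)) * u ^ (-1:ℝ) := by
    intro c
    rw [add_mul, ← Real.rpow_add hu0, ← Real.rpow_add hu0]
    ring_nf
  have hmono := cosh_mono hu0 ha hab
  have hpos : (0:ℝ) < u ^ (-1:ℝ) := Real.rpow_pos_of_pos hu0 _
  have hexp : (0:ℝ) < Real.exp (-(z * (u + 1 / u)) / 2) := Real.exp_pos _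
  calc u ^ (a-1) * Real.exp (-(z * (u + 1/u)) / 2) + u ^ (-a-1) * Real.exp (-(z * (u + 1/u)) / 2)
      = (u ^ (a-1) + u ^ (-a-1)) * Real.exp (-(z * (u + 1/u)) / 2) := by ring
    _ ≤ (u ^ (b-1) + u ^ (-b-1)) * Real.exp (-(z * (u + 1/u)) / 2) := by
        apply mul_le_mul_of_nonneg_right _ hexp.le
        rw [e a, e b]
        exact mul_le_mul_of_nonneg_right hmono hpos.le
    _ = u ^ (b-1) * Real.exp (-(z * (u + 1/u)) / 2) + u ^ (-b-1) * Real.exp (-(z * (u + 1/u)) / 2) := by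
        ring

/-- the recurrence `K_{ν+1} = (2ν/z) K_ν + K_{ν-1}` -/
lemma besselK_rec {ν z : ℝ} (hν : 0 < ν) (hz : 0 < z) :
    besselK (ν + 1) z = (2 * ν / z) * besselK ν z + besselK (ν - 1) z := by
  set g : ℝ → ℝ := fun u => u ^ ν * Real.exp (-(z * (u + 1 / u)) / 2) with hg
  set g' : ℝ → ℝ := fun u =>
    ν * bf ν z u - z / 2 * bf (ν + 1) z u + z / 2 * bf (ν - 1) z u with hg'
  have hg0 : g 0 = 0 := by
    simp [hg, Real.zero_rpow hν.ne']
  have hderiv : ∀ x ∈ Set.Ioi (0:ℝ), HasDerivAt g (g' x) x := by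
    intro x hx
    have hx0 : (0:ℝ) < x := hx
    have hd1 : HasDerivAt (fun u : ℝ => u ^ ν) (ν * x ^ (ν - 1)) x :=
      Real.hasDerivAt_rpow_const (Or.inl hx0.ne')
    have hinv : HasDerivAt (fun u : ℝ => 1 / u) (-(x ^ 2)⁻¹) x := by
      simpa [one_div] using hasDerivAt_inv hx0.ne'
    have hsum : HasDerivAt (fun u : ℝ => u + 1 / u) (1 + -(x ^ 2)⁻¹) x :=
      (hasDerivAt_id x).add hinv
    have hin : HasDerivAt (fun u : ℝ => -(z * (u + 1 / u)) / 2)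
        (-(z * (1 + -(x ^ 2)⁻¹)) / 2) x := ((hsum.const_mul z).neg).div_const 2
    have hexp := hin.exp
    have htot := hd1.mul hexp
    convert htot using 1
    · rfl
    · rfl
    · rfl
    have k2 : x ^ (ν - 1 - 1) = x ^ ν * (x ^ 2)⁻¹ := by
      rw [← Real.rpow_natCast x 2, ← Real.rpow_neg hx0.le, ← Real.rpow_add hx0]
      congr 1
      push_cast
      ring
    have k1 : x ^ (ν + 1 - 1) = x ^ ν := by norm_num
    simp only [hg', bf, k1, k2]
    ring
  have hcont : ContinuousWithinAt g (Set.Ici (0:ℝ)) 0 := by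
    have ht : Tendsto g (nhdsWithin 0 (Set.Ici (0:ℝ))) (nhds 0) := by
      apply tendsto_of_tendsto_of_tendsto_of_le_of_le'
        (tendsto_const_nhds (x := (0:ℝ)))
        (h := fun u : ℝ => u ^ ν)
      · have hc : Tendsto (fun u : ℝ => u ^ ν) (nhds 0) (nhds ((0:ℝ) ^ ν)) :=
          (Real.continuousAt_rpow_const 0 ν (Or.inr hν.le)).tendsto
        rw [Real.zero_rpow hν.ne'] at hc
        exact hc.mono_left nhdsWithin_le_nhds
      · apply eventually_nhdsWithin_of_forall
        intro x hx
        exact mul_nonneg (Real.rpow_nonneg hx _) (Real.exp_pos _).le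
      · apply eventually_nhdsWithin_of_forall
        intro x hx
        have h1 : Real.exp (-(z * (x + 1 / x)) / 2) ≤ 1 := by
          rw [Real.exp_le_one_iff]
          rcases eq_or_lt_of_le (show (0:ℝ) ≤ x from hx) with h | h
          · simp [← h]
          · have : 0 ≤ x + 1 / x := by positivity
            have : 0 ≤ z * (x + 1 / x) := mul_nonneg hz.le this
            linarith
        calc g x ≤ x ^ ν * 1 := by
              exact mul_le_mul_of_nonneg_left h1 (Real.rpow_nonneg hx _)
          _ = x ^ ν := mul_one _
    rw [ContinuousWithinAt, hg0]
    exact ht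
  have htop : Tendsto g atTop (nhds 0) := by
    apply tendsto_of_tendsto_of_tendsto_of_le_of_le'
      (tendsto_const_nhds (x := (0:ℝ)))
      (h := fun u : ℝ => u ^ ν * Real.exp (-(z / 2) * u))
    · exact tendsto_rpow_mul_exp_neg_mul_atTop_nhds_zero ν (z / 2) (by positivity)
    · filter_upwards [eventually_gt_atTop (0:ℝ)] with x hx
      exact mul_nonneg (Real.rpow_nonneg hx.le _) (Real.exp_pos _).le
    · filter_upwards [eventually_gt_atTop (0:ℝ)] with x hx
      apply mul_le_mul_of_nonneg_left _ (Real.rpow_nonneg hx.le _)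
      apply Real.exp_le_exp.mpr
      have : 0 ≤ z * (1 / x) := by positivity
      nlinarith
  have hint : IntegrableOn g' (Set.Ioi (0:ℝ)) := by
    apply Integrable.add
    · exact (((bf_integrableOn hz).const_mul ν)).sub ((bf_integrableOn hz).const_mul (z / 2))
    · exact (bf_integrableOn hz).const_mul (z / 2)
  have hzero := integral_Ioi_of_hasDerivAt_of_tendsto hcont hderiv hint htop
  rw [hg0, sub_zero] at hzero
  have i1 : Integrable (fun u : ℝ => ν * bf ν z u - z / 2 * bf (ν + 1) z u)
      (volume.restrict (Set.Ioi (0:ℝ))) :=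
    ((bf_integrableOn hz).const_mul ν).sub ((bf_integrableOn hz).const_mul (z / 2))
  have i2 : Integrable (fun u : ℝ => z / 2 * bf (ν - 1) z u)
      (volume.restrict (Set.Ioi (0:ℝ))) := (bf_integrableOn hz).const_mul (z / 2)
  have hexpand : ∫ x in Set.Ioi (0:ℝ), g' x =
      ν * (∫ u in Set.Ioi (0:ℝ), bf ν z u)
        - z / 2 * (∫ u in Set.Ioi (0:ℝ), bf (ν + 1) z u)
        + z / 2 * (∫ u in Set.Ioi (0:ℝ), bf (ν - 1) z u) := by
    simp only [hg']
    rw [integral_add i1 i2,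
      integral_sub ((bf_integrableOn hz).const_mul ν) ((bf_integrableOn hz).const_mul (z / 2)),
      integral_const_mul, integral_const_mul, integral_const_mul]
  rw [hexpand] at hzero
  have j1 : (∫ u in Set.Ioi (0:ℝ), bf ν z u) = 2 * besselK ν z := by
    rw [besselK_eq ν z]; ring
  have j2 : (∫ u in Set.Ioi (0:ℝ), bf (ν + 1) z u) = 2 * besselK (ν + 1) z := by
    rw [besselK_eq (ν + 1) z]; ring
  have j3 : (∫ u in Set.Ioi (0:ℝ), bf (ν - 1) z u) = 2 * besselK (ν - 1) z := by
    rw [besselK_eq (ν - 1) z]; ring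
  rw [j1, j2, j3] at hzero
  have hzne : z ≠ 0 := hz.ne'
  field_simp
  nlinarith [hzero]

lemma besselR_bounds {ν z : ℝ} (hν : 1 ≤ ν) (hz : 0 < z) :
    2 * ν / z ≤ besselR ν z ∧ besselR ν z ≤ 2 * ν / z + 1 := by
  have hν0 : 0 < ν := lt_of_lt_of_le one_pos hν
  have hK : 0 < besselK ν z := besselK_pos hz
  have hK1 : 0 < besselK (ν - 1) z := besselK_pos hz
  have hmono : besselK (ν - 1) z ≤ besselK ν z :=
    besselK_mono hz (by linarith) (by linarith)
  have hratio : besselR ν z = 2 * ν / z + besselK (ν - 1) z / besselK ν z := by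
    rw [besselR, besselK_rec hν0 hz]
    field_simp
  have h1 : 0 ≤ besselK (ν - 1) z / besselK ν z := le_of_lt (div_pos hK1 hK)
  have h2 : besselK (ν - 1) z / besselK ν z ≤ 1 := (div_le_one hK).mpr hmono
  constructor <;> [linarith; linarith]

lemma poissonPMF_apply (r : ℝ≥0) (n : ℕ) :
    poissonPMF r n = ENNReal.ofReal (poissonPMFReal r n) := rfl

lemma poisson_hasSum_mean (r : ℝ≥0) :
    HasSum (fun n : ℕ => (n : ℝ) * poissonPMFReal r n) (r : ℝ) := by
  have h := (poissonPMFRealSum r).mul_left (r : ℝ)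
  rw [mul_one] at h
  have he : (fun n : ℕ => ((n + 1 : ℕ) : ℝ) * poissonPMFReal r (n + 1))
      = fun n : ℕ => (r : ℝ) * poissonPMFReal r n := by
    funext n
    unfold poissonPMFReal
    rw [Nat.factorial_succ]
    push_cast
    have hfac : (0:ℝ) < (Nat.factorial n : ℝ) := by positivity
    field_simp
    ring
  have h2 : HasSum (fun n : ℕ => ((n + 1 : ℕ) : ℝ) * poissonPMFReal r (n + 1)) (r : ℝ) := by
    rw [he]; exact h
  have h3 := (hasSum_nat_add_iff
    (f := fun n : ℕ => (n : ℝ) * poissonPMFReal r n) 1).mp h2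
  simpa using h3

lemma poisson_summable_mean (r : ℝ≥0) :
    Summable (fun n : ℕ => (n : ℝ) * poissonPMFReal r n) := ⟨_, poisson_hasSum_mean r⟩

lemma poisson_integrable (r : ℝ≥0) :
    Integrable (fun n : ℕ => (n : ℝ)) (poissonMeasure r) := by
  refine ⟨measurable_from_top.aestronglyMeasurable, ?_⟩
  have key : (∫⁻ n : ℕ, ‖(n : ℝ)‖₊ ∂(poissonMeasure r))
      = ∑' n : ℕ, (‖(n : ℝ)‖₊ : ℝ≥0∞) * poissonMeasure r {n} := lintegral_countable' _
  have hsing : ∀ n : ℕ, poissonMeasure r {n} = ENNReal.ofReal (poissonPMFReal r n) := by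
    intro n
    rw [poissonMeasure_singleton, poissonPMFReal]
  have heq : ∀ n : ℕ, (‖(n : ℝ)‖₊ : ℝ≥0∞) * poissonMeasure r {n}
      = ENNReal.ofReal ((n : ℝ) * poissonPMFReal r n) := by
    intro n
    rw [hsing n, ENNReal.ofReal_mul (Nat.cast_nonneg n)]
    congr 1
    simp [ENNReal.ofReal]
  rw [HasFiniteIntegral]
  simp only [enorm_eq_nnnorm]
  rw [key, tsum_congr heq,
    ← ENNReal.ofReal_tsum_of_nonneg
      (fun n => mul_nonneg (Nat.cast_nonneg n) poissonPMFReal_nonneg)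
      (poisson_summable_mean r)]
  exact ENNReal.ofReal_lt_top

lemma poisson_mean (r : ℝ≥0) :
    ∫ n : ℕ, (n : ℝ) ∂(poissonMeasure r) = (r : ℝ) := by
  rw [integral_poissonMeasure]
  have heq : ∀ n : ℕ, (Real.exp (-(r:ℝ)) * (r:ℝ) ^ n / (Nat.factorial n : ℝ)) • (n : ℝ)
      = (n : ℝ) * poissonPMFReal r n := by
    intro n
    rw [poissonPMFReal, smul_eq_mul, mul_comm]
  rw [tsum_congr heq]
  exact (poisson_hasSum_mean r).tsum_eq

end BesselAux

end BesselAuxSection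

open BesselAux NNReal in
/-- **Theorem 2a: consistency as the number of observed years grows.**
If the annual counts are i.i.d. Poisson(Vλ), then almost surely the posterior mean
`√(φ/ω_K) R_{ν_K+1}(2√(ω_K φ))` of the Poisson intensity converges to `λ` as `K → ∞`. -/
theorem posterior_mean_tendsto_of_many_observations
    {Ω : Type*} [MeasurableSpace Ω] (μ : Measure Ω) [IsProbabilityMeasure μ]
    (lam V α₀ β₀ ξ : ℝ) (hlam : 0 < lam) (hV : 0 < V) (hα₀ : 0 < α₀) (hβ₀ : 0 < β₀)
    (hξ : 0 < ξ) (M : ℕ) (hM : 1 ≤ M) (θ : Fin M → ℝ) (hθ : ∀ m, 0 < θ m)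
    (φ : ℝ) (hφ : φ = ξ * ∑ m, θ m)
    (N : ℕ → Ω → ℕ) (hmeas : ∀ k, Measurable (N k))
    (hindep : iIndepFun N μ)
    (hdist : ∀ k, μ.map (N k) = poissonMeasure (Real.toNNReal (V * lam))) :
    ∀ᵐ x ∂μ, Tendsto (fun K : ℕ =>
        Real.sqrt (φ / (V * K + 1 / β₀)) *
          besselR ((α₀ - 1 - M * ξ + ∑ k ∈ Finset.range K, (N k x : ℝ)) + 1)
            (2 * Real.sqrt ((V * K + 1 / β₀) * φ)))
      atTop (nhds lam) := by

  have hφpos : 0 < φ := by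
    rw [hφ]
    apply mul_pos hξ
    have : Nonempty (Fin M) := ⟨⟨0, hM⟩⟩
    exact Finset.sum_pos (fun m _ => hθ m) Finset.univ_nonempty
  set r : ℝ≥0 := Real.toNNReal (V * lam) with hrdef
  have hr : (r : ℝ) = V * lam := Real.coe_toNNReal _ (by positivity)
  set X : ℕ → Ω → ℝ := fun k x => (N k x : ℝ) with hX
  have cm : Measurable (fun n : ℕ => (n : ℝ)) := measurable_from_top
  have hXmeas : ∀ k, Measurable (X k) := fun k => cm.comp (hmeas k)
  have hmap : ∀ k, μ.map (X k) = (poissonMeasure r).map (fun n : ℕ => (n : ℝ)) := by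
    intro k
    have h0 : X k = (fun n : ℕ => (n : ℝ)) ∘ (N k) := rfl
    rw [h0, ← Measure.map_map cm (hmeas k), hdist k]
  have hident : ∀ k, IdentDistrib (X k) (X 0) μ μ := fun k =>
    ⟨(hXmeas k).aemeasurable, (hXmeas 0).aemeasurable, by rw [hmap k, hmap 0]⟩
  have hpair : Pairwise (Function.onFun (IndepFun · · μ) X) := fun i j hij =>
    (hindep.indepFun hij).comp cm cm
  have hint : Integrable (X 0) μ := by
    have h1 : Integrable (fun n : ℕ => (n : ℝ)) (μ.map (N 0)) := by
      rw [hdist 0]; exact poisson_integrable r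
    exact (integrable_map_measure cm.aestronglyMeasurable (hmeas 0).aemeasurable).mp h1
  have hmean : μ[X 0] = V * lam := by
    have h2 : μ[X 0] = ∫ n : ℕ, (n : ℝ) ∂(μ.map (N 0)) :=
      (integral_map (hmeas 0).aemeasurable cm.aestronglyMeasurable).symm
    rw [h2, hdist 0, poisson_mean, hr]
  have hslln := strong_law_ae_real X hint hpair hident
  rw [hmean] at hslln
  filter_upwards [hslln] with x hx
  set S : ℕ → ℝ := fun K => ∑ k ∈ Finset.range K, (N k x : ℝ) with hSdef
  have hxS : Tendsto (fun K : ℕ => S K / K) atTop (nhds (V * lam)) := hx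
  have hω : ∀ K : ℕ, 0 < V * K + 1 / β₀ := fun K => by positivity
  have hVlam : 0 < V * lam := mul_pos hV hlam
  -- limit (A)
  have hA : Tendsto (fun K : ℕ => ((α₀ - 1 - M * ξ + S K) + 1) / (V * K + 1 / β₀))
      atTop (nhds lam) := by
    have hnum : Tendsto (fun K : ℕ => (α₀ - M * ξ) / K + S K / K) atTop
        (nhds (0 + V * lam)) := (_root_.tendsto_const_div_atTop_nhds_zero_nat _).add hxS
    have hden : Tendsto (fun K : ℕ => V + (1 / β₀) / K) atTop (nhds (V + 0)) :=
      tendsto_const_nhds.add (_root_.tendsto_const_div_atTop_nhds_zero_nat _)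
    have hdiv := hnum.div hden (by rw [add_zero]; exact hV.ne')
    have hval : (0 + V * lam) / (V + 0) = lam := by field_simp; ring
    rw [hval] at hdiv
    apply hdiv.congr'
    filter_upwards [eventually_ge_atTop 1] with K hK
    have hK0 : (K : ℝ) ≠ 0 := Nat.cast_ne_zero.mpr (by omega)
    simp only [Pi.div_apply]
    field_simp
    ring
  -- limit (B)
  have hB : Tendsto (fun K : ℕ => Real.sqrt (φ / (V * K + 1 / β₀))) atTop (nhds 0) := by
    have h1 : Tendsto (fun K : ℕ => V * K + 1 / β₀) atTop atTop := by
      apply tendsto_atTop_add_const_right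
      exact tendsto_natCast_atTop_atTop.const_mul_atTop hV
    have h2 : Tendsto (fun K : ℕ => φ / (V * K + 1 / β₀)) atTop (nhds 0) :=
      tendsto_const_nhds.div_atTop h1
    have h3 := (Real.continuous_sqrt.tendsto 0).comp h2
    rw [Real.sqrt_zero] at h3
    exact h3
  -- eventual lower bound on S
  have hStop : Tendsto S atTop atTop := by
    have h1 : Tendsto (fun K : ℕ => S K / K * K) atTop atTop :=
      Tendsto.pos_mul_atTop hVlam hxS tendsto_natCast_atTop_atTop
    apply h1.congr'
    filter_upwards [eventually_ge_atTop 1] with K hK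
    have hK0 : (K : ℝ) ≠ 0 := Nat.cast_ne_zero.mpr (by omega)
    field_simp
  have hev : ∀ᶠ K : ℕ in atTop, 1 - α₀ + M * ξ ≤ S K :=
    hStop.eventually_ge_atTop _
  -- squeeze
  have hup : Tendsto (fun K : ℕ => ((α₀ - 1 - M * ξ + S K) + 1) / (V * K + 1 / β₀)
      + Real.sqrt (φ / (V * K + 1 / β₀))) atTop (nhds (lam + 0)) := hA.add hB
  rw [add_zero] at hup
  apply tendsto_of_tendsto_of_tendsto_of_le_of_le' hA hup
  · -- lower bound
    filter_upwards [hev] with K hK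
    set ω : ℝ := V * K + 1 / β₀ with hωdef
    set ν : ℝ := (α₀ - 1 - M * ξ + S K) + 1 with hνdef
    have hν1 : 1 ≤ ν := by rw [hνdef]; linarith
    have hsq : 0 < Real.sqrt (ω * φ) := Real.sqrt_pos.mpr (mul_pos (hω K) hφpos)
    have hz : 0 < 2 * Real.sqrt (ω * φ) := by linarith
    obtain ⟨hlow, hhigh⟩ := besselR_bounds hν1 hz
    have e1 : Real.sqrt (φ / ω) * (2 * ν / (2 * Real.sqrt (ω * φ))) = ν / ω := by
      have key : Real.sqrt (φ / ω) / Real.sqrt (ω * φ) = 1 / ω := by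
        rw [← Real.sqrt_div (by positivity : (0:ℝ) ≤ φ / ω)]
        have : φ / ω / (ω * φ) = (ω ^ 2)⁻¹ := by
          field_simp
        rw [this, Real.sqrt_inv, Real.sqrt_sq (hω K).le, one_div]
        rw [hωdef]
        simp [one_div]
      calc Real.sqrt (φ / ω) * (2 * ν / (2 * Real.sqrt (ω * φ)))
          = ν * (Real.sqrt (φ / ω) / Real.sqrt (ω * φ)) := by
            field_simp
        _ = ν * (1 / ω) := by rw [key]
        _ = ν / ω := by ring
    calc ν / ω = Real.sqrt (φ / ω) * (2 * ν / (2 * Real.sqrt (ω * φ))) := e1.symm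
      _ ≤ Real.sqrt (φ / ω) * besselR ν (2 * Real.sqrt (ω * φ)) :=
          mul_le_mul_of_nonneg_left hlow (Real.sqrt_nonneg _)
  · -- upper bound
    filter_upwards [hev] with K hK
    set ω : ℝ := V * K + 1 / β₀ with hωdef
    set ν : ℝ := (α₀ - 1 - M * ξ + S K) + 1 with hνdef
    have hν1 : 1 ≤ ν := by rw [hνdef]; linarith
    have hsq : 0 < Real.sqrt (ω * φ) := Real.sqrt_pos.mpr (mul_pos (hω K) hφpos)
    have hz : 0 < 2 * Real.sqrt (ω * φ) := by linarith
    obtain ⟨hlow, hhigh⟩ := besselR_bounds hν1 hz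
    have e1 : Real.sqrt (φ / ω) * (2 * ν / (2 * Real.sqrt (ω * φ))) = ν / ω := by
      have key : Real.sqrt (φ / ω) / Real.sqrt (ω * φ) = 1 / ω := by
        rw [← Real.sqrt_div (by positivity : (0:ℝ) ≤ φ / ω)]
        have : φ / ω / (ω * φ) = (ω ^ 2)⁻¹ := by
          field_simp
        rw [this, Real.sqrt_inv, Real.sqrt_sq (hω K).le, one_div]
        rw [hωdef]
        simp [one_div]
      calc Real.sqrt (φ / ω) * (2 * ν / (2 * Real.sqrt (ω * φ)))
          = ν * (Real.sqrt (φ / ω) / Real.sqrt (ω * φ)) := by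
            field_simp
        _ = ν * (1 / ω) := by rw [key]
        _ = ν / ω := by ring
    calc Real.sqrt (φ / ω) * besselR ν (2 * Real.sqrt (ω * φ))
        ≤ Real.sqrt (φ / ω) * (2 * ν / (2 * Real.sqrt (ω * φ)) + 1) :=
          mul_le_mul_of_nonneg_left hhigh (Real.sqrt_nonneg _)
      _ = Real.sqrt (φ / ω) * (2 * ν / (2 * Real.sqrt (ω * φ))) + Real.sqrt (φ / ω) := by ring
      _ = ν / ω + Real.sqrt (φ / ω) := by rw [e1]
end

section
/- Fix α₀ > 0, β₀ > 0, V > 0, integers K ≥ 0 and M ≥ 1, counts n₁,…,n_K ∈ ℕ with s = Σ_{k=1}^K n_k, a value θ̄ > 0, and set ω = VK + 1/β₀. Then lim_{ξ→∞} √(ξMθ̄/ω) · R_{α₀ − Mξ + s}(2√(ω ξ M θ̄)) = θ̄; that is, as the coefficient of variation 1/√ξ of the expert opinions tends to 0, the posterior mean of the Poisson intensity converges to the experts' common opinion θ̄. -/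
open MeasureTheory ProbabilityTheory Filter

open Set Real

lemma aux_pow_exp (n : ℕ) {c x : ℝ} (hc : 0 < c) (hx : 0 ≤ x) :
    x ^ n * Real.exp (-(c * x)) ≤ (n.factorial : ℝ) * (2 / c) ^ n * Real.exp (-(c / 2 * x)) := by
  have h1 : (c / 2 * x) ^ n / (n.factorial : ℝ) ≤ Real.exp (c / 2 * x) :=
    Real.pow_div_factorial_le_exp _ (show (0:ℝ) ≤ c / 2 * x by positivity) n
  have hfac : (0:ℝ) < n.factorial := by exact_mod_cast n.factorial_pos
  have h2 : (c/2) ^ n * x ^ n ≤ (n.factorial : ℝ) * Real.exp (c / 2 * x) := by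
    rw [← mul_pow]
    rw [div_le_iff₀ hfac] at h1
    linarith [h1]
  have h3 : x ^ n ≤ (n.factorial : ℝ) * (2 / c) ^ n * Real.exp (c / 2 * x) := by
    have hp : (0:ℝ) < (c/2) ^ n := by positivity
    have h4 : x ^ n ≤ ((n.factorial : ℝ) * Real.exp (c/2*x)) / (c/2)^n := by
      rw [le_div_iff₀ hp]; linarith [h2]
    calc x ^ n ≤ ((n.factorial : ℝ) * Real.exp (c/2*x)) / (c/2)^n := h4
      _ = (n.factorial : ℝ) * (2 / c) ^ n * Real.exp (c / 2 * x) := by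
          rw [div_eq_mul_inv, ← inv_pow]
          have : ((c:ℝ)/2)⁻¹ = 2/c := by field_simp
          rw [this]; ring
  calc x ^ n * Real.exp (-(c * x))
      ≤ ((n.factorial : ℝ) * (2 / c) ^ n * Real.exp (c / 2 * x)) * Real.exp (-(c*x)) := by
        apply mul_le_mul_of_nonneg_right h3 (Real.exp_nonneg _)
    _ = (n.factorial : ℝ) * (2 / c) ^ n * Real.exp (-(c / 2 * x)) := by
        rw [mul_assoc, mul_assoc, ← Real.exp_add]; ring_nf

-- continuity of the basic integrand away from 0
lemma contOn_piece (p ω θ t : ℝ) :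
    ContinuousOn (fun x : ℝ => x ^ p * Real.exp (-(ω * x)) *
      Real.exp (-(t * (Real.log x + θ / x)))) {x : ℝ | x ≠ 0} := by
  apply ContinuousOn.mul
  · apply ContinuousOn.mul
    · exact ContinuousOn.rpow_const continuousOn_id (fun x hx => Or.inl hx)
    · exact (Real.continuous_exp.comp (continuous_const.mul continuous_id).neg).continuousOn
  · apply Real.continuous_exp.comp_continuousOn
    apply ContinuousOn.neg
    apply ContinuousOn.mul continuousOn_const
    apply ContinuousOn.add
    · exact Real.continuousOn_log.mono (by intro x hx; simpa using hx)
    · exact ContinuousOn.div continuousOn_const continuousOn_id (fun x hx => hx)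

-- integrability of x^p e^{-cx} on (1,∞)
lemma int_Ioi (p : ℝ) {c : ℝ} (hc : 0 < c) :
    IntegrableOn (fun x : ℝ => x ^ p * Real.exp (-(c * x))) (Ioi 1) := by
  set n : ℕ := ⌈max p 0⌉₊ with hn
  have hpn : p ≤ (n : ℝ) := le_trans (le_max_left _ _) (Nat.le_ceil _)
  have hmeas : AEStronglyMeasurable (fun x : ℝ => x ^ p * Real.exp (-(c * x)))
      (volume.restrict (Ioi 1)) := by
    apply ContinuousOn.aestronglyMeasurable _ measurableSet_Ioi
    apply ContinuousOn.mul
    · exact ContinuousOn.rpow_const continuousOn_id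
        (fun x hx => Or.inl (by simp only [mem_Ioi] at hx; linarith))
    · exact (Real.continuous_exp.comp (continuous_const.mul continuous_id).neg).continuousOn
  apply Integrable.mono' (g := fun x => ((n.factorial : ℝ) * (2 / c) ^ n) * Real.exp (-(c / 2) * x))
  · exact (exp_neg_integrableOn_Ioi 1 (show 0 < c/2 by positivity)).const_mul _
  · exact hmeas
  · filter_upwards [ae_restrict_mem measurableSet_Ioi] with x hx
    simp only [mem_Ioi] at hx
    have hx0 : (0:ℝ) < x := by linarith
    have h1 : x ^ p ≤ x ^ (n : ℝ) := Real.rpow_le_rpow_of_exponent_le (by linarith) hpn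
    have h2 : x ^ (n:ℝ) = x ^ n := by rw [Real.rpow_natCast]
    rw [norm_eq_abs, abs_of_nonneg (by positivity)]
    calc x ^ p * Real.exp (-(c * x)) ≤ x ^ n * Real.exp (-(c * x)) := by
          apply mul_le_mul_of_nonneg_right _ (Real.exp_nonneg _)
          rw [← h2]; exact h1
      _ ≤ (n.factorial : ℝ) * (2 / c) ^ n * Real.exp (-(c / 2 * x)) :=
          aux_pow_exp n hc hx0.le
      _ = (n.factorial : ℝ) * (2 / c) ^ n * Real.exp (-(c / 2) * x) := by ring_nf

-- integrability of x^p e^{-c/x} on (0,1]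
lemma int_Ioc (p : ℝ) {c : ℝ} (hc : 0 < c) :
    IntegrableOn (fun x : ℝ => x ^ p * Real.exp (-(c / x))) (Ioc 0 1) := by
  set n : ℕ := ⌈max (-p) 0⌉₊ with hn
  have hpn : -p ≤ (n : ℝ) := le_trans (le_max_left _ _) (Nat.le_ceil _)
  have hmeas : AEStronglyMeasurable (fun x : ℝ => x ^ p * Real.exp (-(c / x)))
      (volume.restrict (Ioc 0 1)) := by
    apply ContinuousOn.aestronglyMeasurable _ measurableSet_Ioc
    apply ContinuousOn.mul
    · exact ContinuousOn.rpow_const continuousOn_id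
        (fun x hx => Or.inl (ne_of_gt hx.1))
    · exact Real.continuous_exp.comp_continuousOn
        ((ContinuousOn.div continuousOn_const continuousOn_id (fun x hx => ne_of_gt hx.1)).neg)
  apply Integrable.mono' (g := fun _ : ℝ => (n.factorial : ℝ) * (2 / c) ^ n)
  · exact integrableOn_const (by simp [Real.volume_Ioc])
  · exact hmeas
  · filter_upwards [ae_restrict_mem measurableSet_Ioc] with x hx
    obtain ⟨hx0, hx1⟩ := hx
    rw [norm_eq_abs, abs_of_nonneg (by positivity)]
    set y : ℝ := 1 / x with hy
    have hy1 : 1 ≤ y := by rw [hy]; rw [le_div_iff₀ hx0]; linarith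
    have hy0 : 0 < y := by linarith
    have hxy : x = 1 / y := by rw [hy]; field_simp
    have e1 : x ^ p = y ^ (-p) := by
      rw [hy, one_div, Real.inv_rpow hx0.le, Real.rpow_neg hx0.le, inv_inv]
    have e2 : y ^ (-p) ≤ y ^ (n:ℝ) := Real.rpow_le_rpow_of_exponent_le hy1 hpn
    have e3 : c / x = c * y := by rw [hxy]; field_simp
    calc x ^ p * Real.exp (-(c / x)) ≤ y ^ (n:ℝ) * Real.exp (-(c * y)) := by
          rw [e1, e3]
          exact mul_le_mul_of_nonneg_right e2 (Real.exp_nonneg _)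
      _ = y ^ n * Real.exp (-(c * y)) := by rw [Real.rpow_natCast]
      _ ≤ (n.factorial : ℝ) * (2 / c) ^ n * Real.exp (-(c / 2 * y)) := aux_pow_exp n hc hy0.le
      _ ≤ (n.factorial : ℝ) * (2 / c) ^ n := by
          nth_rewrite 2 [← mul_one ((n.factorial : ℝ) * (2 / c) ^ n)]
          apply mul_le_mul_of_nonneg_left _ (by positivity)
          exact Real.exp_le_one_iff.mpr (by positivity |> neg_nonpos_of_nonneg)

lemma int_main (p : ℝ) {ω θ t : ℝ} (hω : 0 < ω) (hθ : 0 < θ) (ht : 0 < t) :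
    IntegrableOn (fun x : ℝ => x ^ p * Real.exp (-(ω * x)) *
      Real.exp (-(t * (Real.log x + θ / x)))) (Ioi 0) := by
  rw [show Ioi (0:ℝ) = Ioc 0 1 ∪ Ioi 1 from (Ioc_union_Ioi_eq_Ioi zero_le_one).symm]
  apply IntegrableOn.union
  · -- on (0,1]
    have hmeas : AEStronglyMeasurable
        (fun x : ℝ => x ^ p * Real.exp (-(ω * x)) * Real.exp (-(t * (Real.log x + θ / x))))
        (volume.restrict (Ioc 0 1)) := by
      apply ((contOn_piece p ω θ t).mono _).aestronglyMeasurable measurableSet_Ioc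
      intro x hx; exact ne_of_gt hx.1
    apply Integrable.mono' (g := fun x : ℝ => x ^ (p - t) * Real.exp (-((t * θ) / x)))
    · exact int_Ioc (p - t) (by positivity)
    · exact hmeas
    · filter_upwards [ae_restrict_mem measurableSet_Ioc] with x hx
      obtain ⟨hx0, hx1⟩ := hx
      rw [norm_eq_abs, abs_of_nonneg (by positivity)]
      have e1 : Real.exp (-(t * (Real.log x + θ / x)))
          = x ^ (-t) * Real.exp (-((t * θ) / x)) := by
        rw [Real.rpow_def_of_pos hx0, ← Real.exp_add]
        congr 1; ring
      rw [e1]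
      have e2 : x ^ p * Real.exp (-(ω * x)) * (x ^ (-t) * Real.exp (-((t * θ) / x)))
          = (x ^ p * x ^ (-t)) * Real.exp (-((t * θ) / x)) * Real.exp (-(ω * x)) := by ring
      rw [e2, ← Real.rpow_add hx0]
      have e3 : p + -t = p - t := by ring
      rw [e3]
      nth_rewrite 2 [← mul_one (x ^ (p - t) * Real.exp (-((t * θ) / x)))]
      apply mul_le_mul_of_nonneg_left _ (by positivity)
      exact Real.exp_le_one_iff.mpr (by positivity |> neg_nonpos_of_nonneg)
  · -- on (1,∞)
    have hmeas : AEStronglyMeasurable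
        (fun x : ℝ => x ^ p * Real.exp (-(ω * x)) * Real.exp (-(t * (Real.log x + θ / x))))
        (volume.restrict (Ioi 1)) := by
      apply ((contOn_piece p ω θ t).mono _).aestronglyMeasurable measurableSet_Ioi
      intro x hx; simp only [mem_Ioi] at hx; exact ne_of_gt (by linarith)
    apply Integrable.mono' (g := fun x : ℝ => x ^ p * Real.exp (-(ω * x)))
    · exact int_Ioi p hω
    · exact hmeas
    · filter_upwards [ae_restrict_mem measurableSet_Ioi] with x hx
      simp only [mem_Ioi] at hx
      have hx0 : (0:ℝ) < x := by linarith
      rw [norm_eq_abs, abs_of_nonneg (by positivity)]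
      nth_rewrite 2 [← mul_one (x ^ p * Real.exp (-(ω * x)))]
      apply mul_le_mul_of_nonneg_left _ (by positivity)
      apply Real.exp_le_one_iff.mpr
      apply neg_nonpos_of_nonneg
      have hlog : 0 ≤ Real.log x := Real.log_nonneg hx.le
      have : 0 ≤ θ / x := by positivity
      positivity

lemma hfun_strict_right {θ a b : ℝ} (hθ : 0 < θ) (ha : θ ≤ a) (hab : a < b) :
    Real.log a + θ / a < Real.log b + θ / b := by
  have ha0 : 0 < a := lt_of_lt_of_le hθ ha
  have hb0 : 0 < b := lt_trans ha0 hab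
  have h1 : Real.log (a / b) < a / b - 1 :=
    Real.log_lt_sub_one_of_pos (by positivity) (by
      intro h; rw [div_eq_one_iff_eq hb0.ne'] at h; exact (ne_of_lt hab) h)
  rw [Real.log_div ha0.ne' hb0.ne'] at h1
  have h2 : θ / a - θ / b ≤ 1 - a / b := by
    rw [div_sub_div _ _ ha0.ne' hb0.ne']
    have hrhs : 1 - a / b = (b - a) / b := by field_simp
    rw [hrhs, div_le_div_iff₀ (by positivity) hb0]
    nlinarith [mul_nonneg (mul_nonneg (sub_nonneg.2 hab.le) hb0.le) (sub_nonneg.2 ha)]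
  linarith
lemma hfun_strict_left {θ a b : ℝ} (ha : 0 < a) (hab : a < b) (hb : b ≤ θ) :
    Real.log b + θ / b < Real.log a + θ / a := by
  have hb0 : 0 < b := lt_trans ha hab
  have hθ : 0 < θ := lt_of_lt_of_le hb0 hb
  have h1 : Real.log (b / a) < b / a - 1 :=
    Real.log_lt_sub_one_of_pos (by positivity) (by
      intro h; rw [div_eq_one_iff_eq ha.ne'] at h; exact (ne_of_lt hab) h.symm)
  rw [Real.log_div hb0.ne' ha.ne'] at h1
  have h2 : b / a - 1 ≤ θ / a - θ / b := by
    rw [div_sub_div _ _ ha.ne' hb0.ne']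
    have hlhs : b / a - 1 = (b - a) / a := by field_simp
    rw [hlhs, div_le_div_iff₀ ha (by positivity)]
    nlinarith [mul_nonneg (mul_nonneg (sub_nonneg.2 hab.le) ha.le) (sub_nonneg.2 hb)]
  linarith

noncomputable def Hfun (θ x : ℝ) : ℝ := Real.log x + θ / x

noncomputable def Ffun (m ω θ t x : ℝ) : ℝ :=
  x ^ (m - 1) * Real.exp (-(ω * x)) * Real.exp (-(t * Hfun θ x))


lemma Ffun_pos {m ω θ t : ℝ} {x : ℝ} (hx : 0 < x) : 0 < Ffun m ω θ t x := by
  unfold Ffun; positivity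

lemma Ffun_contOn (m ω θ t : ℝ) : ContinuousOn (Ffun m ω θ t) {x : ℝ | x ≠ 0} :=
  contOn_piece (m - 1) ω θ t

lemma Ffun_factor (m ω θ t x : ℝ) :
    Ffun m ω θ t x = Ffun m ω θ 1 x * Real.exp (-((t - 1) * Hfun θ x)) := by
  have h : Real.exp (-(t * Hfun θ x))
      = Real.exp (-(1 * Hfun θ x)) * Real.exp (-((t - 1) * Hfun θ x)) := by
    rw [← Real.exp_add]; congr 1; ring
  unfold Ffun; rw [h]; ring

lemma Ffun_int {m ω θ t : ℝ} (hω : 0 < ω) (hθ : 0 < θ) (ht : 0 < t) :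
    IntegrableOn (Ffun m ω θ t) (Ioi 0) := int_main (m - 1) hω hθ ht

lemma Ffun_int_x {m ω θ t : ℝ} (hω : 0 < ω) (hθ : 0 < θ) (ht : 0 < t) :
    IntegrableOn (fun x => x * Ffun m ω θ t x) (Ioi 0) := by
  have h : IntegrableOn (fun x : ℝ => x ^ m * Real.exp (-(ω * x)) *
      Real.exp (-(t * (Real.log x + θ / x)))) (Ioi 0) := int_main m hω hθ ht
  have heq : EqOn (fun x : ℝ => x ^ m * Real.exp (-(ω * x)) *
      Real.exp (-(t * (Real.log x + θ / x)))) (fun x => x * Ffun m ω θ t x) (Ioi 0) := by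
    intro x hx
    have hx0 : (0:ℝ) < x := hx
    unfold Ffun Hfun
    have hxp : x ^ (m : ℝ) = x * x ^ (m - 1 : ℝ) := by
      have h2 := Real.rpow_add hx0 1 (m - 1)
      rw [Real.rpow_one, show (1:ℝ) + (m - 1) = m by ring] at h2
      exact h2
    simp only [hxp]; ring
  exact h.congr_fun heq measurableSet_Ioi

lemma Ffun_int_abs {m ω θ t : ℝ} (hω : 0 < ω) (hθ : 0 < θ) (ht : 0 < t) :
    IntegrableOn (fun x => |x - θ| * Ffun m ω θ t x) (Ioi 0) := by
  apply Integrable.mono' (g := fun x => x * Ffun m ω θ t x + θ * Ffun m ω θ t x)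
  · exact (Ffun_int_x hω hθ ht).add ((Ffun_int hω hθ ht).const_mul θ)
  · apply AEStronglyMeasurable.mul
    · exact (continuous_abs.comp (continuous_id.sub continuous_const)).aestronglyMeasurable
    · exact ((Ffun_contOn m ω θ t).mono (fun x hx => ne_of_gt hx)).aestronglyMeasurable
        measurableSet_Ioi
  · filter_upwards [ae_restrict_mem measurableSet_Ioi] with x hx
    have hx0 : (0:ℝ) < x := hx
    have hF := Ffun_pos (m := m) (ω := ω) (θ := θ) (t := t) hx0
    rw [norm_eq_abs, abs_of_nonneg (mul_nonneg (abs_nonneg _) hF.le)]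
    have habs : |x - θ| ≤ x + θ := by
      rw [abs_le]; constructor <;> linarith
    nlinarith

lemma Hfun_strict_right {θ a b : ℝ} (hθ : 0 < θ) (ha : θ ≤ a) (hab : a < b) :
    Hfun θ a < Hfun θ b := hfun_strict_right hθ ha hab
lemma Hfun_strict_left {θ a b : ℝ} (ha : 0 < a) (hab : a < b) (hb : b ≤ θ) :
    Hfun θ b < Hfun θ a := hfun_strict_left ha hab hb

set_option maxHeartbeats 2000000 in
lemma laplace {m ω θ : ℝ} (hω : 0 < ω) (hθ : 0 < θ) :
    Tendsto (fun t : ℝ => (∫ x in Ioi (0:ℝ), x * Ffun m ω θ t x) /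
        (∫ x in Ioi (0:ℝ), Ffun m ω θ t x)) atTop (nhds θ) := by
  rw [Metric.tendsto_atTop]
  intro ε hε
  have hε'pos : 0 < min (ε / 3) (θ / 2) := lt_min (by linarith) (by linarith)
  set ε' : ℝ := min (ε / 3) (θ / 2) with hε'def
  have hε'3 : ε' ≤ ε / 3 := min_le_left _ _
  have hε'θ : ε' ≤ θ / 2 := min_le_right _ _
  have hapos : 0 < θ - ε' := by linarith
  set δ : ℝ := min (Hfun θ (θ - ε')) (Hfun θ (θ + ε')) - Hfun θ θ with hδdef
  have hδpos : 0 < δ := by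
    have h1 : Hfun θ θ < Hfun θ (θ - ε') := Hfun_strict_left hapos (by linarith) le_rfl
    have h2 : Hfun θ θ < Hfun θ (θ + ε') := Hfun_strict_right hθ le_rfl (by linarith)
    have h3 := lt_min h1 h2
    rw [hδdef]; linarith
  -- continuity of Hfun θ at θ; choose η'
  have hHcont : ContinuousAt (Hfun θ) θ := by
    unfold Hfun
    exact ContinuousAt.add (Real.continuousAt_log hθ.ne')
      (ContinuousAt.div continuousAt_const continuousAt_id hθ.ne')
  obtain ⟨η, hη0, hηθ⟩ := Metric.continuousAt_iff.mp hHcont (δ / 2) (by linarith)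
  have hη'pos : 0 < min (η / 2) ε' := lt_min (by linarith) hε'pos
  set η' : ℝ := min (η / 2) ε' with hη'def
  have hη'ε' : η' ≤ ε' := min_le_right _ _
  set J : Set ℝ := Icc (θ - η') (θ + η') with hJdef
  have hJbound : ∀ x ∈ J, Hfun θ x ≤ Hfun θ θ + δ / 2 := by
    intro x hx
    obtain ⟨hx1, hx2⟩ := hx
    have hd : dist x θ < η := by
      rw [Real.dist_eq, abs_lt]
      have : η' ≤ η / 2 := min_le_left _ _
      constructor <;> linarith
    have := hηθ hd
    rw [Real.dist_eq, abs_lt] at this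
    linarith [this.2]
  have hJsub : J ⊆ Ioi (0:ℝ) := by
    intro x hx
    have := hx.1
    simp only [mem_Ioi]
    linarith
  have hJne : J.Nonempty := ⟨θ, by rw [hJdef, mem_Icc]; constructor <;> linarith⟩
  have hF1cont : ContinuousOn (Ffun m ω θ 1) J :=
    (Ffun_contOn m ω θ 1).mono (fun x hx => ne_of_gt (hJsub hx))
  obtain ⟨x₀, hx₀J, hx₀min⟩ := isCompact_Icc.exists_isMinOn hJne hF1cont
  have hb0pos : 0 < Ffun m ω θ 1 x₀ := Ffun_pos (hJsub hx₀J)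
  set c₂ : ℝ := ∫ x in J, Ffun m ω θ 1 x with hc₂def
  have hF1intJ : IntegrableOn (Ffun m ω θ 1) J := (Ffun_int hω hθ one_pos).mono_set hJsub
  have hvol : (volume J).toReal = 2 * η' := by
    rw [hJdef, Real.volume_Icc, ENNReal.toReal_ofReal (by linarith)]; ring
  have hc₂pos : 0 < c₂ := by
    have hle := setIntegral_ge_of_const_le (μ := volume) (s := J) (c := Ffun m ω θ 1 x₀)
      measurableSet_Icc (by rw [hJdef, Real.volume_Icc]; exact ENNReal.ofReal_ne_top)
      (fun x hx => isMinOn_iff.mp hx₀min x hx) hF1intJ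
    have : 0 < Ffun m ω θ 1 x₀ * (volume J).toReal := by
      rw [hvol]; positivity
    rw [Measure.real, smul_eq_mul, mul_comm] at hle
    linarith
  set C₁ : ℝ := ∫ x in Ioi (0:ℝ), |x - θ| * Ffun m ω θ 1 x with hC₁def
  have habs1 : IntegrableOn (fun x => |x - θ| * Ffun m ω θ 1 x) (Ioi 0) :=
    Ffun_int_abs hω hθ one_pos
  have hC₁nonneg : 0 ≤ C₁ :=
    setIntegral_nonneg measurableSet_Ioi (fun x hx => mul_nonneg (abs_nonneg _) (Ffun_pos hx).le)
  -- choose T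
  have htend : Tendsto (fun t : ℝ => C₁ / c₂ * Real.exp (-((t - 1) * (δ / 2)))) atTop (nhds 0) := by
    rw [show (0:ℝ) = C₁ / c₂ * 0 by ring]
    apply Tendsto.const_mul
    apply Real.tendsto_exp_atBot.comp
    apply Filter.tendsto_neg_atBot_iff.mpr
    exact Tendsto.atTop_mul_const (by linarith)
      (tendsto_atTop_add_const_right atTop (-1) tendsto_id)
  have hev : ∀ᶠ t : ℝ in atTop,
      C₁ / c₂ * Real.exp (-((t - 1) * (δ / 2))) < ε / 3 ∧ 1 ≤ t := by
    apply Filter.Eventually.and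
    · exact htend.eventually (gt_mem_nhds (show (0:ℝ) < ε / 3 by linarith))
    · exact eventually_ge_atTop 1
  obtain ⟨T, hT⟩ := Filter.eventually_atTop.mp hev
  refine ⟨T, fun t ht => ?_⟩
  obtain ⟨hlt, ht1⟩ := hT t ht
  have ht0 : (0:ℝ) < t := by linarith
  have htm1 : (0:ℝ) ≤ t - 1 := by linarith
  -- integrability for this t
  have hFt_int : IntegrableOn (Ffun m ω θ t) (Ioi 0) := Ffun_int hω hθ ht0
  have hxFt_int : IntegrableOn (fun x => x * Ffun m ω θ t x) (Ioi 0) := Ffun_int_x hω hθ ht0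
  have habs_t : IntegrableOn (fun x => |x - θ| * Ffun m ω θ t x) (Ioi 0) :=
    Ffun_int_abs hω hθ ht0
  set A : ℝ := ∫ x in Ioi (0:ℝ), x * Ffun m ω θ t x with hAdef
  set B : ℝ := ∫ x in Ioi (0:ℝ), Ffun m ω θ t x with hBdef
  set E1 : ℝ := Real.exp (-((t - 1) * (Hfun θ θ + δ / 2))) with hE1def
  set E2 : ℝ := Real.exp (-((t - 1) * (Hfun θ θ + δ))) with hE2def
  -- lower bound for B
  have hBgeJ : (∫ x in J, Ffun m ω θ t x) ≤ B := by
    apply setIntegral_mono_set hFt_int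
    · filter_upwards [ae_restrict_mem measurableSet_Ioi] with x hx using (Ffun_pos hx).le
    · exact HasSubset.Subset.eventuallyLE hJsub
  have hJlow : E1 * c₂ ≤ ∫ x in J, Ffun m ω θ t x := by
    have key : (∫ x in J, E1 * Ffun m ω θ 1 x) ≤ ∫ x in J, Ffun m ω θ t x := by
      apply integral_mono_of_nonneg
      · filter_upwards [ae_restrict_mem measurableSet_Icc] with x hx
        exact mul_nonneg (Real.exp_nonneg _) (Ffun_pos (hJsub hx)).le
      · exact hFt_int.mono_set hJsub
      · filter_upwards [ae_restrict_mem measurableSet_Icc] with x hx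
        rw [Ffun_factor m ω θ t x, mul_comm E1 (Ffun m ω θ 1 x)]
        apply mul_le_mul_of_nonneg_left _ (Ffun_pos (hJsub hx)).le
        rw [hE1def]
        apply Real.exp_le_exp.mpr
        have := hJbound x hx
        nlinarith
    rw [integral_const_mul] at key
    exact key
  have hBpos : 0 < B := by
    have : 0 < E1 * c₂ := by positivity
    linarith
  -- upper bound for ∫ |x - θ| Ft outside
  have hout : ∀ x ∈ Ioi (0:ℝ) \ Icc (θ - ε') (θ + ε'), Hfun θ θ + δ ≤ Hfun θ x := by
    intro x hx
    obtain ⟨hx0, hxout⟩ := hx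
    have hx0' : (0:ℝ) < x := hx0
    rw [mem_Icc, not_and_or] at hxout
    rcases hxout with h | h
    · push_neg at h
      have h1 : Hfun θ (θ - ε') < Hfun θ x := Hfun_strict_left hx0' h (by linarith)
      have h2 : min (Hfun θ (θ - ε')) (Hfun θ (θ + ε')) ≤ Hfun θ (θ - ε') := min_le_left _ _
      rw [hδdef]; linarith
    · push_neg at h
      have h1 : Hfun θ (θ + ε') < Hfun θ x := Hfun_strict_right hθ (by linarith) h
      have h2 : min (Hfun θ (θ - ε')) (Hfun θ (θ + ε')) ≤ Hfun θ (θ + ε') := min_le_right _ _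
      rw [hδdef]; linarith
  have houtset : MeasurableSet (Ioi (0:ℝ) \ Icc (θ - ε') (θ + ε')) :=
    measurableSet_Ioi.diff measurableSet_Icc
  have hNout : (∫ x in Ioi (0:ℝ) \ Icc (θ - ε') (θ + ε'), |x - θ| * Ffun m ω θ t x)
      ≤ E2 * C₁ := by
    have step1 : (∫ x in Ioi (0:ℝ) \ Icc (θ - ε') (θ + ε'), |x - θ| * Ffun m ω θ t x)
        ≤ ∫ x in Ioi (0:ℝ) \ Icc (θ - ε') (θ + ε'), E2 * (|x - θ| * Ffun m ω θ 1 x) := by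
      apply integral_mono_of_nonneg
      · filter_upwards [ae_restrict_mem houtset] with x hx
        exact mul_nonneg (abs_nonneg _) (Ffun_pos hx.1).le
      · exact (habs1.mono_set diff_subset).const_mul E2
      · filter_upwards [ae_restrict_mem houtset] with x hx
        rw [Ffun_factor m ω θ t x]
        have hb : Real.exp (-((t - 1) * Hfun θ x)) ≤ E2 := by
          rw [hE2def]
          apply Real.exp_le_exp.mpr
          have := hout x hx
          nlinarith
        calc |x - θ| * (Ffun m ω θ 1 x * Real.exp (-((t - 1) * Hfun θ x)))
            ≤ |x - θ| * (Ffun m ω θ 1 x * E2) := by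
              apply mul_le_mul_of_nonneg_left _ (abs_nonneg _)
              exact mul_le_mul_of_nonneg_left hb (Ffun_pos hx.1).le
          _ = E2 * (|x - θ| * Ffun m ω θ 1 x) := by ring
    have step2 : (∫ x in Ioi (0:ℝ) \ Icc (θ - ε') (θ + ε'), E2 * (|x - θ| * Ffun m ω θ 1 x))
        = E2 * ∫ x in Ioi (0:ℝ) \ Icc (θ - ε') (θ + ε'), |x - θ| * Ffun m ω θ 1 x :=
      integral_const_mul _ _
    have step3 : (∫ x in Ioi (0:ℝ) \ Icc (θ - ε') (θ + ε'), |x - θ| * Ffun m ω θ 1 x) ≤ C₁ := by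
      apply setIntegral_mono_set habs1
      · filter_upwards [ae_restrict_mem measurableSet_Ioi] with x hx
        exact mul_nonneg (abs_nonneg _) (Ffun_pos hx).le
      · exact HasSubset.Subset.eventuallyLE diff_subset
    calc (∫ x in Ioi (0:ℝ) \ Icc (θ - ε') (θ + ε'), |x - θ| * Ffun m ω θ t x)
        ≤ E2 * ∫ x in Ioi (0:ℝ) \ Icc (θ - ε') (θ + ε'), |x - θ| * Ffun m ω θ 1 x := by
          rw [← step2]; exact step1
      _ ≤ E2 * C₁ := mul_le_mul_of_nonneg_left step3 (Real.exp_nonneg _)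
  -- inside bound
  have hNin : (∫ x in Ioi (0:ℝ) ∩ Icc (θ - ε') (θ + ε'), |x - θ| * Ffun m ω θ t x)
      ≤ ε' * B := by
    have hms : MeasurableSet (Ioi (0:ℝ) ∩ Icc (θ - ε') (θ + ε')) :=
      measurableSet_Ioi.inter measurableSet_Icc
    have step1 : (∫ x in Ioi (0:ℝ) ∩ Icc (θ - ε') (θ + ε'), |x - θ| * Ffun m ω θ t x)
        ≤ ∫ x in Ioi (0:ℝ) ∩ Icc (θ - ε') (θ + ε'), ε' * Ffun m ω θ t x := by
      apply setIntegral_mono_on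
      · exact habs_t.mono_set inter_subset_left
      · exact (hFt_int.mono_set inter_subset_left).const_mul ε'
      · exact hms
      · intro x hx
        apply mul_le_mul_of_nonneg_right _ (Ffun_pos hx.1).le
        rw [abs_le]
        obtain ⟨h1, h2⟩ := hx.2
        constructor <;> linarith
    have step2 : (∫ x in Ioi (0:ℝ) ∩ Icc (θ - ε') (θ + ε'), ε' * Ffun m ω θ t x)
        = ε' * ∫ x in Ioi (0:ℝ) ∩ Icc (θ - ε') (θ + ε'), Ffun m ω θ t x :=
      integral_const_mul _ _
    have step3 : (∫ x in Ioi (0:ℝ) ∩ Icc (θ - ε') (θ + ε'), Ffun m ω θ t x) ≤ B := by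
      apply setIntegral_mono_set hFt_int
      · filter_upwards [ae_restrict_mem measurableSet_Ioi] with x hx using (Ffun_pos hx).le
      · exact HasSubset.Subset.eventuallyLE inter_subset_left
    calc (∫ x in Ioi (0:ℝ) ∩ Icc (θ - ε') (θ + ε'), |x - θ| * Ffun m ω θ t x)
        ≤ ε' * ∫ x in Ioi (0:ℝ) ∩ Icc (θ - ε') (θ + ε'), Ffun m ω θ t x := by
          rw [← step2]; exact step1
      _ ≤ ε' * B := mul_le_mul_of_nonneg_left step3 hε'pos.le
  -- split
  have hsplit : (∫ x in Ioi (0:ℝ), |x - θ| * Ffun m ω θ t x)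
      = (∫ x in Ioi (0:ℝ) ∩ Icc (θ - ε') (θ + ε'), |x - θ| * Ffun m ω θ t x)
        + ∫ x in Ioi (0:ℝ) \ Icc (θ - ε') (θ + ε'), |x - θ| * Ffun m ω θ t x :=
    (integral_inter_add_diff measurableSet_Icc habs_t).symm
  -- |A - θ B| ≤ ∫ |x-θ| Ft
  have hAB : |A - θ * B| ≤ ∫ x in Ioi (0:ℝ), |x - θ| * Ffun m ω θ t x := by
    have hθB : θ * B = ∫ x in Ioi (0:ℝ), θ * Ffun m ω θ t x := (integral_const_mul _ _).symm
    have hsub : A - θ * B = ∫ x in Ioi (0:ℝ), (x * Ffun m ω θ t x - θ * Ffun m ω θ t x) := by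
      rw [hAdef, hθB, ← integral_sub hxFt_int (hFt_int.const_mul θ)]
    rw [hsub]
    have h1 : |∫ x in Ioi (0:ℝ), (x * Ffun m ω θ t x - θ * Ffun m ω θ t x)|
        ≤ ∫ x in Ioi (0:ℝ), |x * Ffun m ω θ t x - θ * Ffun m ω θ t x| := by
      have := norm_integral_le_integral_norm (μ := volume.restrict (Ioi (0:ℝ)))
        (fun x => x * Ffun m ω θ t x - θ * Ffun m ω θ t x)
      simpa [Real.norm_eq_abs] using this
    have h2 : (∫ x in Ioi (0:ℝ), |x * Ffun m ω θ t x - θ * Ffun m ω θ t x|)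
        = ∫ x in Ioi (0:ℝ), |x - θ| * Ffun m ω θ t x := by
      apply setIntegral_congr_fun measurableSet_Ioi
      intro x hx
      have e : x * Ffun m ω θ t x - θ * Ffun m ω θ t x = (x - θ) * Ffun m ω θ t x := by ring
      dsimp only
      rw [e, abs_mul, abs_of_nonneg (Ffun_pos hx).le]
    rw [← h2]; exact h1
  -- final computation
  have hN : |A - θ * B| ≤ ε' * B + E2 * C₁ := by
    rw [hsplit] at hAB
    linarith
  rw [Real.dist_eq]
  have hBE : E1 * c₂ ≤ B := le_trans hJlow hBgeJ
  have hE1c₂pos : 0 < E1 * c₂ := by positivity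
  have hfrac : A / B - θ = (A - θ * B) / B := by
    rw [sub_div, mul_div_assoc, div_self hBpos.ne', mul_one]
  rw [hfrac, abs_div, abs_of_pos hBpos]
  have hb1 : |A - θ * B| / B ≤ (ε' * B + E2 * C₁) / B := by gcongr
  have he : (ε' * B + E2 * C₁) / B = ε' + E2 * C₁ / B := by
    rw [add_div, mul_div_assoc, div_self hBpos.ne', mul_one]
  have hE2C₁ : 0 ≤ E2 * C₁ := mul_nonneg (Real.exp_nonneg _) hC₁nonneg
  have hb2 : E2 * C₁ / B ≤ E2 * C₁ / (E1 * c₂) := by gcongr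
  have hE2eq : E2 = Real.exp (-((t - 1) * (δ / 2))) * E1 := by
    rw [hE1def, hE2def, ← Real.exp_add]; congr 1; ring
  have hE1ne : E1 ≠ 0 := by rw [hE1def]; exact (Real.exp_pos _).ne'
  have hE2E1 : E2 * C₁ / (E1 * c₂) = C₁ / c₂ * Real.exp (-((t - 1) * (δ / 2))) := by
    calc E2 * C₁ / (E1 * c₂)
        = (E1 * (Real.exp (-((t - 1) * (δ / 2))) * C₁)) / (E1 * c₂) := by rw [hE2eq]; ring_nf
      _ = (Real.exp (-((t - 1) * (δ / 2))) * C₁) / c₂ := mul_div_mul_left _ _ hE1ne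
      _ = C₁ / c₂ * Real.exp (-((t - 1) * (δ / 2))) := by ring
  calc |A - θ * B| / B ≤ (ε' * B + E2 * C₁) / B := hb1
    _ = ε' + E2 * C₁ / B := he
    _ ≤ ε' + E2 * C₁ / (E1 * c₂) := by linarith
    _ = ε' + C₁ / c₂ * Real.exp (-((t - 1) * (δ / 2))) := by rw [hE2E1]
    _ < ε := by linarith

lemma sqrt_fact1 {ω φ : ℝ} (hω : 0 < ω) (hφ : 0 < φ) :
    Real.sqrt (ω * φ) * Real.sqrt (ω / φ) = ω := by
  rw [← Real.sqrt_mul (by positivity), show ω * φ * (ω / φ) = ω ^ 2 by field_simp,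
    Real.sqrt_sq hω.le]

lemma sqrt_fact2 {ω φ : ℝ} (hω : 0 < ω) (hφ : 0 < φ) :
    Real.sqrt (ω * φ) = φ * Real.sqrt (ω / φ) := by
  rw [show ω * φ = φ ^ 2 * (ω / φ) by field_simp,
    Real.sqrt_mul (by positivity), Real.sqrt_sq hφ.le]

lemma besselK_eq {ν ω φ : ℝ} (hω : 0 < ω) (hφ : 0 < φ) :
    besselK ν (2 * Real.sqrt (ω * φ)) =
      (1 / 2) * Real.sqrt (ω / φ) ^ ν *
        ∫ x in Ioi (0:ℝ), x ^ (ν - 1) * Real.exp (-(ω * x + φ / x)) := by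
  have hc : 0 < Real.sqrt (ω / φ) := Real.sqrt_pos.mpr (by positivity)
  set c := Real.sqrt (ω / φ) with hcdef
  have hs1 : Real.sqrt (ω * φ) * c = ω := sqrt_fact1 hω hφ
  have hs2 : Real.sqrt (ω * φ) = φ * c := sqrt_fact2 hω hφ
  unfold besselK
  have key := integral_comp_mul_left_Ioi
    (fun u => u ^ (ν - 1) * Real.exp (-(2 * Real.sqrt (ω * φ) * (u + 1 / u)) / 2)) 0 hc
  rw [mul_zero] at key
  have key2 : (∫ u in Ioi (0:ℝ), u ^ (ν - 1)
        * Real.exp (-(2 * Real.sqrt (ω * φ) * (u + 1 / u)) / 2))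
      = c * ∫ x in Ioi (0:ℝ), (c * x) ^ (ν - 1)
        * Real.exp (-(2 * Real.sqrt (ω * φ) * (c * x + 1 / (c * x))) / 2) := by
    rw [key, smul_eq_mul, ← mul_assoc, mul_inv_cancel₀ hc.ne', one_mul]
  have hinner : (∫ x in Ioi (0:ℝ), (c * x) ^ (ν - 1)
        * Real.exp (-(2 * Real.sqrt (ω * φ) * (c * x + 1 / (c * x))) / 2))
      = c ^ (ν - 1) * ∫ x in Ioi (0:ℝ), x ^ (ν - 1) * Real.exp (-(ω * x + φ / x)) := by
    rw [← integral_const_mul]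
    apply setIntegral_congr_fun measurableSet_Ioi
    intro x hx
    have hx0 : (0:ℝ) < x := hx
    dsimp only
    rw [Real.mul_rpow hc.le hx0.le]
    have hexp : -(2 * Real.sqrt (ω * φ) * (c * x + 1 / (c * x))) / 2 = -(ω * x + φ / x) := by
      have h2 : Real.sqrt (ω * φ) / (c * x) = φ / x := by
        rw [hs2, mul_comm φ c]; exact mul_div_mul_left _ _ hc.ne'
      have h1 : Real.sqrt (ω * φ) * (c * x) = ω * x := by
        rw [← mul_assoc, hs1]
      rw [neg_div, show 2 * Real.sqrt (ω * φ) * (c * x + 1 / (c * x)) / 2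
        = Real.sqrt (ω * φ) * (c * x) + Real.sqrt (ω * φ) / (c * x) by ring, h1, h2]
    rw [hexp]; ring
  rw [key2, hinner]
  have hpow : c * c ^ (ν - 1) = c ^ ν := by
    have := Real.rpow_add hc 1 (ν - 1)
    rw [Real.rpow_one, show (1:ℝ) + (ν - 1) = ν by ring] at this
    rw [← this]
  rw [← mul_assoc, ← mul_assoc]
  rw [show (1:ℝ)/2 * c * c ^ (ν - 1) = 1/2 * (c * c ^ (ν-1)) by ring, hpow]

lemma Ffun_ptw {m ω θ t x : ℝ} (hx0 : 0 < x) :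
    x ^ (m - t - 1) * Real.exp (-(ω * x + t * θ / x)) = Ffun m ω θ t x := by
  unfold Ffun Hfun
  rw [show (m - t - 1 : ℝ) = (m - 1) + (-t) by ring, Real.rpow_add hx0,
    Real.rpow_def_of_pos hx0 (-t)]
  have eexp : Real.exp (Real.log x * (-t)) * Real.exp (-(ω * x + t * θ / x))
      = Real.exp (-(ω * x)) * Real.exp (-(t * (Real.log x + θ / x))) := by
    rw [← Real.exp_add, ← Real.exp_add]; congr 1; ring
  rw [mul_assoc, eexp, ← mul_assoc]

lemma bessel_eq {m ω θ t : ℝ} (hω : 0 < ω) (hθ : 0 < θ) (ht : 0 < t) :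
    Real.sqrt (t * θ / ω) * besselR (m - t) (2 * Real.sqrt (ω * (t * θ))) =
      (∫ x in Ioi (0:ℝ), x * Ffun m ω θ t x) / (∫ x in Ioi (0:ℝ), Ffun m ω θ t x) := by
  have hφ : 0 < t * θ := by positivity
  have hc : 0 < Real.sqrt (ω / (t * θ)) := Real.sqrt_pos.mpr (by positivity)
  set c := Real.sqrt (ω / (t * θ)) with hcdef
  set A : ℝ := ∫ x in Ioi (0:ℝ), x * Ffun m ω θ t x with hAdef
  set B : ℝ := ∫ x in Ioi (0:ℝ), Ffun m ω θ t x with hBdef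
  have h1 : besselK (m - t) (2 * Real.sqrt (ω * (t * θ))) = 1/2 * c ^ (m - t) * B := by
    rw [besselK_eq hω hφ, hBdef]
    congr 1
    apply setIntegral_congr_fun measurableSet_Ioi
    intro x hx
    exact Ffun_ptw hx
  have h2 : besselK (m - t + 1) (2 * Real.sqrt (ω * (t * θ)))
      = (1/2 * c ^ (m - t)) * (c * A) := by
    rw [besselK_eq hω hφ, hAdef]
    have hpow : c ^ (m - t + 1 : ℝ) = c ^ (m - t : ℝ) * c := by
      have := Real.rpow_add hc (m - t) 1
      rw [Real.rpow_one] at this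
      exact this
    rw [hpow]
    rw [show (1:ℝ)/2 * (c ^ (m - t : ℝ) * c) = (1/2 * c ^ (m - t:ℝ)) * c by ring, mul_assoc]
    congr 1
    congr 1
    apply setIntegral_congr_fun measurableSet_Ioi
    intro x hx
    have hx0 : (0:ℝ) < x := hx
    dsimp only
    rw [show (m - t + 1 - 1 : ℝ) = 1 + (m - t - 1) by ring, Real.rpow_add hx0, Real.rpow_one,
      mul_assoc, Ffun_ptw hx0]
  have hne : (1:ℝ)/2 * c ^ (m - t : ℝ) ≠ 0 := by positivity
  have hone : Real.sqrt (t * θ / ω) * c = 1 := by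
    rw [hcdef, ← Real.sqrt_mul (by positivity), show t * θ / ω * (ω / (t * θ)) = 1 by
      field_simp, Real.sqrt_one]
  unfold besselR
  rw [h2, h1, show (1:ℝ)/2 * c ^ (m - t:ℝ) * B = (1/2 * c ^ (m - t:ℝ)) * B by ring,
    mul_div_mul_left _ _ hne]
  calc Real.sqrt (t * θ / ω) * (c * A / B) = (Real.sqrt (t * θ / ω) * c) * A / B := by ring
    _ = A / B := by rw [hone, one_mul]

/-- **Theorem 2b: vanishing coefficient of variation of the experts.**
As `ξ → ∞` (i.e. the coefficient of variation `1/√ξ` of the expert opinions tends to 0),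
the posterior mean of the Poisson intensity converges to the experts' opinion `θ̄`. -/
theorem posterior_mean_tendsto_of_precise_experts
    (α₀ β₀ V θbar : ℝ) (hα₀ : 0 < α₀) (hβ₀ : 0 < β₀) (hV : 0 < V) (hθbar : 0 < θbar)
    (K M : ℕ) (hM : 1 ≤ M) (n : Fin K → ℕ)
    (s ω : ℝ) (hs : s = ∑ k, (n k : ℝ)) (hω : ω = V * K + 1 / β₀) :
    Tendsto (fun ξ : ℝ =>
        Real.sqrt (ξ * M * θbar / ω) *
          besselR (α₀ - M * ξ + s) (2 * Real.sqrt (ω * (ξ * M * θbar))))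
      atTop (nhds θbar) := by
  have hω' : 0 < ω := by
    have h1 : 0 ≤ V * K := mul_nonneg hV.le (Nat.cast_nonneg K)
    have h2 : 0 < 1 / β₀ := by positivity
    rw [hω]; linarith
  have hM' : (0:ℝ) < M := by exact_mod_cast Nat.lt_of_lt_of_le Nat.zero_lt_one hM
  have hcomp : Tendsto (fun ξ : ℝ => (M:ℝ) * ξ) atTop atTop :=
    Tendsto.const_mul_atTop hM' tendsto_id
  apply Tendsto.congr' _ ((laplace (m := α₀ + s) hω' hθbar).comp hcomp)
  filter_upwards [eventually_gt_atTop (0:ℝ)] with ξ hξ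
  have ht : 0 < (M:ℝ) * ξ := by positivity
  have heq := bessel_eq (m := α₀ + s) hω' hθbar ht
  simp only [Function.comp_apply]
  rw [show α₀ - (M:ℝ) * ξ + s = (α₀ + s) - (M:ℝ) * ξ by ring,
    show ξ * (M:ℝ) * θbar = ((M:ℝ) * ξ) * θbar by ring]
  exact heq.symm
end

section
/- Fix λ > 0, ξ > 0, α₀ > 0, β₀ > 0, V > 0, an integer K ≥ 0 and counts n₁,…,n_K ∈ ℕ with s = Σ_{k=1}^K n_k, and set ω = VK + 1/β₀. Let (θ_m)_{m≥1} be a sequence of i.i.d. random variables on a probability space, each with the Gamma distribution of shape ξ and scale λ/ξ. For M ≥ 1 put ν_M = α₀ − 1 − Mξ + s and φ_M = ξ·Σ_{m=1}^M θ_m. Then almost surely, √(φ_M/ω) · R_{ν_M+1}(2√(ω φ_M)) converges to λ as M → ∞. -/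
open MeasureTheory ProbabilityTheory Filter

noncomputable def Ig (ω φ p : ℝ) : ℝ :=
  ∫ x in Set.Ioi (0:ℝ), x ^ (p - 1) * Real.exp (-(ω * x) - φ / x)

lemma Ig_contOn (ω φ p : ℝ) :
    ContinuousOn (fun x : ℝ => x ^ (p - 1) * Real.exp (-(ω * x) - φ / x)) (Set.Ioi 0) := by
  intro x hx
  have hx0 : x ≠ 0 := ne_of_gt hx
  exact ContinuousAt.continuousWithinAt
    (((Real.continuousAt_rpow_const x _ (Or.inl hx0)).mul
      ((((continuousAt_const.mul continuousAt_id).neg).sub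
        (continuousAt_const.div continuousAt_id hx0)).rexp)))

lemma Ig_aesm (ω φ p : ℝ) :
    AEStronglyMeasurable (fun x : ℝ => x ^ (p - 1) * Real.exp (-(ω * x) - φ / x))
      (volume.restrict (Set.Ioi 0)) :=
  (Ig_contOn ω φ p).aestronglyMeasurable measurableSet_Ioi

lemma Ig_integrableOn {ω φ : ℝ} (hω : 0 < ω) (hφ : 0 < φ) (p : ℝ) :
    IntegrableOn (fun x : ℝ => x ^ (p - 1) * Real.exp (-(ω * x) - φ / x)) (Set.Ioi 0) := by
  rw [show Set.Ioi (0:ℝ) = Set.Ioc 0 1 ∪ Set.Ioi 1 from (Set.Ioc_union_Ioi_eq_Ioi zero_le_one).symm]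
  refine IntegrableOn.union ?_ ?_
  · -- on (0,1]: bounded by N!/φ^N
    set N : ℕ := ⌈1 - p⌉₊ with hN
    have hNe : 1 - p ≤ N := Nat.le_ceil _
    refine Integrable.mono' (g := fun _ => (N.factorial : ℝ) / φ ^ N)
      ((integrableOn_const_iff (C := (N.factorial : ℝ) / φ ^ N)).mpr (Or.inr ?_))
      ((Ig_aesm ω φ p).mono_measure (Measure.restrict_mono Set.Ioc_subset_Ioi_self le_rfl)) ?_
    · rw [Real.volume_Ioc]; exact ENNReal.ofReal_lt_top
    · rw [ae_restrict_iff' measurableSet_Ioc]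
      refine ae_of_all _ (fun x hx => ?_)
      obtain ⟨hx0, hx1⟩ := hx
      have hxp : (0:ℝ) < x := hx0
      have h1 : ‖x ^ (p - 1) * Real.exp (-(ω * x) - φ / x)‖
          = x ^ (p - 1) * Real.exp (-(ω * x) - φ / x) := by
        rw [Real.norm_of_nonneg]; positivity
      rw [h1]
      have h2 : Real.exp (-(ω * x) - φ / x) ≤ Real.exp (-(φ / x)) := by
        apply Real.exp_le_exp.2
        have : 0 ≤ ω * x := by positivity
        linarith
      have h4 : (φ / x) ^ N / (N.factorial : ℝ) ≤ Real.exp (φ / x) :=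
        Real.pow_div_factorial_le_exp _ (by positivity) N
      have h3 : Real.exp (-(φ / x)) ≤ (N.factorial : ℝ) * x ^ N / φ ^ N := by
        rw [Real.exp_neg]
        have h5 : (0:ℝ) < (φ / x) ^ N / (N.factorial : ℝ) := by positivity
        calc (Real.exp (φ / x))⁻¹ ≤ ((φ / x) ^ N / (N.factorial : ℝ))⁻¹ :=
              inv_anti₀ h5 h4
          _ = (N.factorial : ℝ) * x ^ N / φ ^ N := by
              rw [inv_div, div_pow, div_div_eq_mul_div]
      calc x ^ (p - 1) * Real.exp (-(ω * x) - φ / x)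
          ≤ x ^ (p - 1) * ((N.factorial : ℝ) * x ^ N / φ ^ N) := by
            refine mul_le_mul_of_nonneg_left (h2.trans h3) (by positivity)
        _ = ((N.factorial : ℝ) / φ ^ N) * x ^ (p - 1 + N) := by
            rw [Real.rpow_add hxp, Real.rpow_natCast]; ring
        _ ≤ ((N.factorial : ℝ) / φ ^ N) * 1 := by
            refine mul_le_mul_of_nonneg_left ?_ (by positivity)
            exact Real.rpow_le_one hx0.le hx1 (by linarith)
        _ = (N.factorial : ℝ) / φ ^ N := by ring
  · -- on (1,∞)
    have hbase : IntegrableOn (fun x : ℝ => x ^ (max (p-1) 0) * Real.exp (-ω * x)) (Set.Ioi 0) := by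
      have := integrableOn_rpow_mul_exp_neg_mul_rpow (p := 1) (s := max (p-1) 0) (b := ω)
        (lt_of_lt_of_le neg_one_lt_zero (le_max_right _ _)) zero_lt_one hω
      simpa [Real.rpow_one] using this
    refine Integrable.mono' (hbase.mono_set (Set.Ioi_subset_Ioi zero_le_one))
      ((Ig_aesm ω φ p).mono_measure (Measure.restrict_mono (Set.Ioi_subset_Ioi zero_le_one) le_rfl))
      ?_
    rw [ae_restrict_iff' measurableSet_Ioi]
    refine ae_of_all _ (fun x hx => ?_)
    have hx1 : (1:ℝ) < x := hx
    have hxp : (0:ℝ) < x := lt_trans zero_lt_one hx1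
    have h1 : ‖x ^ (p - 1) * Real.exp (-(ω * x) - φ / x)‖
        = x ^ (p - 1) * Real.exp (-(ω * x) - φ / x) := by
      rw [Real.norm_of_nonneg]; positivity
    rw [h1]
    refine mul_le_mul (Real.rpow_le_rpow_of_exponent_le hx1.le (le_max_left _ _)) ?_
      (Real.exp_pos _).le (by positivity)
    apply Real.exp_le_exp.2
    have : 0 ≤ φ / x := by positivity
    linarith

lemma Ig_pos {ω φ : ℝ} (hω : 0 < ω) (hφ : 0 < φ) (p : ℝ) : 0 < Ig ω φ p := by
  rw [Ig]
  rw [setIntegral_pos_iff_support_of_nonneg_ae ?_ (Ig_integrableOn hω hφ p)]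
  · refine lt_of_lt_of_le ?_ (measure_mono (fun x hx =>
      (⟨ne_of_gt (by have : (0:ℝ) < x := hx; positivity), hx⟩ :
        x ∈ Function.support _ ∩ Set.Ioi 0)))
    rw [Real.volume_Ioi]; exact ENNReal.zero_lt_top
  · filter_upwards [self_mem_ae_restrict measurableSet_Ioi] with x hx
    have : (0:ℝ) < x := hx
    positivity
lemma Ig_rec {ω φ : ℝ} (hω : 0 < ω) (hφ : 0 < φ) (p : ℝ) :
    ω * Ig ω φ (p + 1) = p * Ig ω φ p + φ * Ig ω φ (p - 1) := by
  set E : ℝ → ℝ := fun x => Real.exp (-(ω * x) - φ / x) with hE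
  set F : ℝ → ℝ := fun x => x ^ p * E x with hF
  set F' : ℝ → ℝ := fun x =>
    p * (x ^ (p - 1) * E x) - ω * (x ^ (p + 1 - 1) * E x) + φ * (x ^ (p - 1 - 1) * E x) with hF'
  have hI1 : IntegrableOn (fun x : ℝ => x ^ (p - 1) * E x) (Set.Ioi 0) :=
    Ig_integrableOn hω hφ p
  have hI2 : IntegrableOn (fun x : ℝ => x ^ (p + 1 - 1) * E x) (Set.Ioi 0) :=
    Ig_integrableOn hω hφ (p + 1)
  have hI3 : IntegrableOn (fun x : ℝ => x ^ (p - 1 - 1) * E x) (Set.Ioi 0) :=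
    Ig_integrableOn hω hφ (p - 1)
  have hF'int : IntegrableOn F' (Set.Ioi 0) :=
    ((hI1.const_mul p).sub (hI2.const_mul ω)).add (hI3.const_mul φ)
  -- derivative
  have hderiv : ∀ x ∈ Set.Ioi (0:ℝ), HasDerivAt F (F' x) x := by
    intro x hx
    have hx0 : (0:ℝ) < x := hx
    have h1 : HasDerivAt (fun y : ℝ => y ^ p) (p * x ^ (p - 1)) x :=
      Real.hasDerivAt_rpow_const (Or.inl hx0.ne')
    have h2 : HasDerivAt (fun y : ℝ => -(ω * y) - φ / y) (-ω + φ / x ^ 2) x := by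
      have ha : HasDerivAt (fun y : ℝ => ω * y) ω x := by
        simpa using (hasDerivAt_id x).const_mul ω
      have hb : HasDerivAt (fun y : ℝ => φ / y) (φ * (-(x ^ 2)⁻¹)) x := by
        simpa [div_eq_mul_inv] using (hasDerivAt_inv hx0.ne').const_mul φ
      have := ha.neg.sub hb
      refine this.congr_deriv ?_
      ring
    have h3 : HasDerivAt (fun y : ℝ => E y) (E x * (-ω + φ / x ^ 2)) x := by
      simpa [hE] using h2.exp
    have h4 := h1.mul h3
    refine h4.congr_deriv (Eq.symm ?_)
    show p * (x ^ (p - 1) * E x) - ω * (x ^ (p + 1 - 1) * E x) + φ * (x ^ (p - 1 - 1) * E x) = _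
    have hxp : x ^ (p + 1 - 1) = x ^ p := by norm_num
    have hxm : x ^ (p - 1 - 1) = x ^ p / x ^ 2 := by
      rw [show p - 1 - 1 = p - 2 by ring, show (2:ℝ) = ((2:ℕ):ℝ) by norm_num,
        Real.rpow_sub hx0, Real.rpow_natCast]
    rw [hxp, hxm]
    field_simp
    ring
  -- limit at infinity
  have htop : Filter.Tendsto F Filter.atTop (nhds 0) := by
    refine tendsto_of_tendsto_of_tendsto_of_le_of_le'
      (tendsto_const_nhds) (tendsto_rpow_mul_exp_neg_mul_atTop_nhds_zero p ω hω) ?_ ?_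
    · filter_upwards [Filter.eventually_gt_atTop (0:ℝ)] with x hx
      have : (0:ℝ) < x := hx
      rw [hF]; positivity
    · filter_upwards [Filter.eventually_gt_atTop (0:ℝ)] with x hx
      refine mul_le_mul_of_nonneg_left ?_ (Real.rpow_nonneg hx.le p)
      apply Real.exp_le_exp.2
      have : 0 ≤ φ / x := by positivity
      linarith
  -- FTC on (a, ∞)
  have key : ∀ a : ℝ, 0 < a → ∫ x in Set.Ioi a, F' x = - F a := by
    intro a ha
    have := integral_Ioi_of_hasDerivAt_of_tendsto
      (f := F) (f' := F') (a := a) (m := 0)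
      ((hderiv a ha).continuousAt.continuousWithinAt)
      (fun x hx => hderiv x (lt_trans ha hx))
      (hF'int.mono_set (Set.Ioi_subset_Ioi ha.le)) htop
    rw [this]; ring
  -- take a = 1/(n+1) → 0
  have hset : (⋃ n : ℕ, Set.Ioi ((1:ℝ) / (n + 1))) = Set.Ioi 0 := by
    ext x
    simp only [Set.mem_iUnion, Set.mem_Ioi]
    constructor
    · rintro ⟨n, hn⟩
      exact lt_trans (by positivity) hn
    · intro hx
      obtain ⟨n, hn⟩ := exists_nat_one_div_lt hx
      exact ⟨n, hn⟩
  have hmono : Monotone (fun n : ℕ => Set.Ioi ((1:ℝ) / (n + 1))) := by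
    intro m n hmn
    apply Set.Ioi_subset_Ioi
    apply one_div_le_one_div_of_le (by positivity)
    have : (m:ℝ) ≤ n := Nat.cast_le.mpr hmn
    linarith
  have lim1 : Filter.Tendsto (fun n : ℕ => ∫ x in Set.Ioi ((1:ℝ)/(n+1)), F' x)
      Filter.atTop (nhds (∫ x in Set.Ioi (0:ℝ), F' x)) := by
    have := MeasureTheory.tendsto_setIntegral_of_monotone
      (fun n : ℕ => measurableSet_Ioi) hmono (hset ▸ hF'int)
    rwa [hset] at this
  have lim2 : Filter.Tendsto (fun n : ℕ => ∫ x in Set.Ioi ((1:ℝ)/(n+1)), F' x)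
      Filter.atTop (nhds 0) := by
    have heq : ∀ n : ℕ, (∫ x in Set.Ioi ((1:ℝ)/(n+1)), F' x) = - F (1/(n+1)) :=
      fun n => key _ (by positivity)
    simp only [heq]
    rw [show (0:ℝ) = -0 by ring]
    apply Filter.Tendsto.neg
    -- F (1/(n+1)) → 0
    have hT : Filter.Tendsto (fun n : ℕ => ((n:ℝ) + 1)) Filter.atTop Filter.atTop :=
      Filter.tendsto_atTop_add_const_right _ 1 tendsto_natCast_atTop_atTop
    have T2 : Filter.Tendsto (fun n : ℕ => ((n:ℝ)+1) ^ (-p) * Real.exp (-φ * ((n:ℝ)+1)))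
        Filter.atTop (nhds 0) :=
      (tendsto_rpow_mul_exp_neg_mul_atTop_nhds_zero (-p) φ hφ).comp hT
    have T3 : Filter.Tendsto (fun n : ℕ => Real.exp (-(ω / ((n:ℝ)+1))))
        Filter.atTop (nhds 1) := by
      have h := ((tendsto_const_nhds (x := ω) (f := Filter.atTop (α := ℕ))).div_atTop hT).neg
      have h2 := Real.continuous_exp.continuousAt.tendsto.comp h
      simpa [Function.comp_def] using h2
    have := T2.mul T3
    rw [zero_mul] at this
    refine this.congr (fun n => ?_)
    have hn0 : (0:ℝ) < (n:ℝ) + 1 := by positivity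
    have e1 : ((1:ℝ)/((n:ℝ)+1)) ^ p = ((n:ℝ)+1) ^ (-p) := by
      rw [one_div, Real.inv_rpow hn0.le, ← Real.rpow_neg hn0.le]
    have e2 : -(ω * ((1:ℝ)/((n:ℝ)+1))) - φ / ((1:ℝ)/((n:ℝ)+1))
        = -φ * ((n:ℝ)+1) + -(ω / ((n:ℝ)+1)) := by
      field_simp
      ring
    show _ = F (1/((n:ℝ)+1))
    rw [hF]
    show _ = ((1:ℝ)/((n:ℝ)+1)) ^ p * E ((1:ℝ)/((n:ℝ)+1))
    rw [hE]
    show _ = ((1:ℝ)/((n:ℝ)+1)) ^ p * Real.exp (-(ω * ((1:ℝ)/((n:ℝ)+1))) - φ / ((1:ℝ)/((n:ℝ)+1)))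
    rw [e1, e2, Real.exp_add, mul_assoc]
  have hzero : (∫ x in Set.Ioi (0:ℝ), F' x) = 0 := tendsto_nhds_unique lim1 lim2
  -- split the integral
  have hIg1 : Ig ω φ p = ∫ x in Set.Ioi (0:ℝ), x ^ (p - 1) * E x := rfl
  have hIg2 : Ig ω φ (p+1) = ∫ x in Set.Ioi (0:ℝ), x ^ (p + 1 - 1) * E x := rfl
  have hIg3 : Ig ω φ (p-1) = ∫ x in Set.Ioi (0:ℝ), x ^ (p - 1 - 1) * E x := rfl
  have hsplit : (∫ x in Set.Ioi (0:ℝ), F' x)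
      = p * Ig ω φ p - ω * Ig ω φ (p + 1) + φ * Ig ω φ (p - 1) := by
    have e1 : (∫ x in Set.Ioi (0:ℝ), F' x)
        = (∫ x in Set.Ioi (0:ℝ), (p * (x ^ (p - 1) * E x) - ω * (x ^ (p + 1 - 1) * E x)))
          + ∫ x in Set.Ioi (0:ℝ), φ * (x ^ (p - 1 - 1) * E x) :=
      MeasureTheory.integral_add ((hI1.const_mul p).sub (hI2.const_mul ω)) (hI3.const_mul φ)
    have e2 : (∫ x in Set.Ioi (0:ℝ), (p * (x ^ (p - 1) * E x) - ω * (x ^ (p + 1 - 1) * E x)))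
        = (∫ x in Set.Ioi (0:ℝ), p * (x ^ (p - 1) * E x))
          - ∫ x in Set.Ioi (0:ℝ), ω * (x ^ (p + 1 - 1) * E x) :=
      MeasureTheory.integral_sub (hI1.const_mul p) (hI2.const_mul ω)
    rw [e1, e2, MeasureTheory.integral_const_mul, MeasureTheory.integral_const_mul,
      MeasureTheory.integral_const_mul, hIg1, hIg2, hIg3]
  rw [hsplit] at hzero
  linarith
lemma Ig_sq_le {ω φ : ℝ} (hω : 0 < ω) (hφ : 0 < φ) (p : ℝ) :
    (Ig ω φ p) ^ 2 ≤ Ig ω φ (p - 1) * Ig ω φ (p + 1) := by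
  set A := Ig ω φ (p - 1) with hA
  set B := Ig ω φ p with hB
  set C := Ig ω φ (p + 1) with hC
  have hApos : 0 < A := Ig_pos hω hφ _
  have hBpos : 0 < B := Ig_pos hω hφ _
  have hCpos : 0 < C := Ig_pos hω hφ _
  set t : ℝ := B / C with ht
  set f : ℝ → ℝ := fun x => x ^ ((p - 2) / 2) * Real.exp ((-(ω * x) - φ / x) / 2) with hf
  set g : ℝ → ℝ := fun x => x ^ (p / 2) * Real.exp ((-(ω * x) - φ / x) / 2) with hg
  have hI1 : IntegrableOn (fun x : ℝ => x ^ (p - 1 - 1) * Real.exp (-(ω * x) - φ / x))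
      (Set.Ioi 0) := Ig_integrableOn hω hφ (p - 1)
  have hI2 : IntegrableOn (fun x : ℝ => x ^ (p - 1) * Real.exp (-(ω * x) - φ / x))
      (Set.Ioi 0) := Ig_integrableOn hω hφ p
  have hI3 : IntegrableOn (fun x : ℝ => x ^ (p + 1 - 1) * Real.exp (-(ω * x) - φ / x))
      (Set.Ioi 0) := Ig_integrableOn hω hφ (p + 1)
  -- pointwise identity
  have hpt : ∀ x ∈ Set.Ioi (0:ℝ), (f x - t * g x) ^ 2
      = (x ^ (p - 1 - 1) * Real.exp (-(ω * x) - φ / x))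
        - (2 * t) * (x ^ (p - 1) * Real.exp (-(ω * x) - φ / x))
        + t ^ 2 * (x ^ (p + 1 - 1) * Real.exp (-(ω * x) - φ / x)) := by
    intro x hx
    have hx0 : (0:ℝ) < x := hx
    have hff : f x * f x = x ^ (p - 1 - 1) * Real.exp (-(ω * x) - φ / x) := by
      rw [hf]
      show (x ^ ((p - 2) / 2) * Real.exp ((-(ω * x) - φ / x) / 2))
        * (x ^ ((p - 2) / 2) * Real.exp ((-(ω * x) - φ / x) / 2)) = _
      rw [mul_mul_mul_comm, ← Real.rpow_add hx0, ← Real.exp_add]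
      congr 1
      · congr 1
        ring
      · congr 1
        ring
    have hfg : f x * g x = x ^ (p - 1) * Real.exp (-(ω * x) - φ / x) := by
      rw [hf, hg]
      show (x ^ ((p - 2) / 2) * Real.exp ((-(ω * x) - φ / x) / 2))
        * (x ^ (p / 2) * Real.exp ((-(ω * x) - φ / x) / 2)) = _
      rw [mul_mul_mul_comm, ← Real.rpow_add hx0, ← Real.exp_add]
      congr 1
      · congr 1
        ring
      · congr 1
        ring
    have hgg : g x * g x = x ^ (p + 1 - 1) * Real.exp (-(ω * x) - φ / x) := by
      rw [hg]
      show (x ^ (p / 2) * Real.exp ((-(ω * x) - φ / x) / 2))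
        * (x ^ (p / 2) * Real.exp ((-(ω * x) - φ / x) / 2)) = _
      rw [mul_mul_mul_comm, ← Real.rpow_add hx0, ← Real.exp_add]
      congr 1
      · congr 1
        ring
      · congr 1
        ring
    rw [← hff, ← hfg, ← hgg]
    ring
  have hnn : 0 ≤ ∫ x in Set.Ioi (0:ℝ), (f x - t * g x) ^ 2 :=
    setIntegral_nonneg measurableSet_Ioi (fun x _ => sq_nonneg _)
  have hcongr : (∫ x in Set.Ioi (0:ℝ), (f x - t * g x) ^ 2)
      = A - 2 * t * B + t ^ 2 * C := by
    rw [setIntegral_congr_fun measurableSet_Ioi hpt]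
    have e1 : (∫ x in Set.Ioi (0:ℝ),
          (x ^ (p - 1 - 1) * Real.exp (-(ω * x) - φ / x)
            - 2 * t * (x ^ (p - 1) * Real.exp (-(ω * x) - φ / x))
            + t ^ 2 * (x ^ (p + 1 - 1) * Real.exp (-(ω * x) - φ / x))))
        = (∫ x in Set.Ioi (0:ℝ),
            (x ^ (p - 1 - 1) * Real.exp (-(ω * x) - φ / x)
              - 2 * t * (x ^ (p - 1) * Real.exp (-(ω * x) - φ / x))))
          + ∫ x in Set.Ioi (0:ℝ), t ^ 2 * (x ^ (p + 1 - 1) * Real.exp (-(ω * x) - φ / x)) :=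
      MeasureTheory.integral_add (hI1.sub (hI2.const_mul (2*t))) (hI3.const_mul (t^2))
    have e2 : (∫ x in Set.Ioi (0:ℝ),
          (x ^ (p - 1 - 1) * Real.exp (-(ω * x) - φ / x)
            - 2 * t * (x ^ (p - 1) * Real.exp (-(ω * x) - φ / x))))
        = (∫ x in Set.Ioi (0:ℝ), x ^ (p - 1 - 1) * Real.exp (-(ω * x) - φ / x))
          - ∫ x in Set.Ioi (0:ℝ), 2 * t * (x ^ (p - 1) * Real.exp (-(ω * x) - φ / x)) :=
      MeasureTheory.integral_sub hI1 (hI2.const_mul (2*t))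
    rw [e1, e2, MeasureTheory.integral_const_mul, MeasureTheory.integral_const_mul]
    rw [hA, hB, hC, Ig, Ig, Ig]
  rw [hcongr] at hnn
  have ht2 : A - 2 * t * B + t ^ 2 * C = A - B ^ 2 / C := by
    rw [ht]; field_simp; ring
  rw [ht2] at hnn
  have : B ^ 2 / C ≤ A := by linarith
  calc B ^ 2 = (B ^ 2 / C) * C := by field_simp
    _ ≤ A * C := mul_le_mul_of_nonneg_right this hCpos.le
lemma Ig_ratio_lower {ω φ : ℝ} (hω : 0 < ω) (hφ : 0 < φ) (p : ℝ) :
    (p + Real.sqrt (p ^ 2 + 4 * ω * φ)) / (2 * ω) ≤ Ig ω φ (p + 1) / Ig ω φ p := by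
  have hA : 0 < Ig ω φ (p - 1) := Ig_pos hω hφ _
  have hB : 0 < Ig ω φ p := Ig_pos hω hφ _
  have hC : 0 < Ig ω φ (p + 1) := Ig_pos hω hφ _
  set r : ℝ := Ig ω φ (p + 1) / Ig ω φ p with hr
  have hrpos : 0 < r := div_pos hC hB
  have hrec := Ig_rec hω hφ p
  have hsq := Ig_sq_le hω hφ p
  have key : ω * Ig ω φ (p + 1) ^ 2
      ≥ p * Ig ω φ (p + 1) * Ig ω φ p + φ * Ig ω φ p ^ 2 := by
    nlinarith [mul_le_mul_of_nonneg_left hsq hφ.le]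
  have hq : ω * r ^ 2 ≥ p * r + φ := by
    rw [ge_iff_le, ← sub_nonneg]
    have e : ω * r ^ 2 - (p * r + φ)
        = (ω * Ig ω φ (p + 1) ^ 2
            - (p * Ig ω φ (p + 1) * Ig ω φ p + φ * Ig ω φ p ^ 2)) / Ig ω φ p ^ 2 := by
      rw [hr]; field_simp
    rw [e]
    apply div_nonneg (by linarith) (by positivity)
  have h2wr : 0 < 2 * ω * r - p := by
    nlinarith [hq, hφ, hrpos, mul_pos hω (mul_pos hrpos hrpos), sq_nonneg r]
  have hq' : (0:ℝ) ≤ ω * r ^ 2 - (p * r + φ) := by linarith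
  have hsqrt : Real.sqrt (p ^ 2 + 4 * ω * φ) ≤ 2 * ω * r - p := by
    have h1 : p ^ 2 + 4 * ω * φ ≤ (2 * ω * r - p) ^ 2 := by
      nlinarith [mul_nonneg hω.le hq']
    calc Real.sqrt (p ^ 2 + 4 * ω * φ) ≤ Real.sqrt ((2 * ω * r - p) ^ 2) :=
          Real.sqrt_le_sqrt h1
      _ = 2 * ω * r - p := Real.sqrt_sq h2wr.le
  rw [div_le_iff₀ (by positivity)]
  nlinarith [hsqrt]

lemma Ig_ratio_upper {ω φ : ℝ} (hω : 0 < ω) (hφ : 0 < φ) (p : ℝ) :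
    Ig ω φ (p + 1) / Ig ω φ p
      ≤ ((p + 1) + Real.sqrt ((p + 1) ^ 2 + 4 * ω * φ)) / (2 * ω) := by
  have hB : 0 < Ig ω φ p := Ig_pos hω hφ _
  have hC : 0 < Ig ω φ (p + 1) := Ig_pos hω hφ _
  have hD : 0 < Ig ω φ (p + 2) := Ig_pos hω hφ _
  set r : ℝ := Ig ω φ (p + 1) / Ig ω φ p with hr
  have hrpos : 0 < r := div_pos hC hB
  have hrec := Ig_rec hω hφ (p + 1)
  rw [show p + 1 + 1 = p + 2 by ring, show p + 1 - 1 = p by ring] at hrec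
  have hsq := Ig_sq_le hω hφ (p + 1)
  rw [show p + 1 - 1 = p by ring, show p + 1 + 1 = p + 2 by ring] at hsq
  have hq : ω * r ^ 2 ≤ (p + 1) * r + φ := by
    have hmono : r ≤ Ig ω φ (p + 2) / Ig ω φ (p + 1) := by
      rw [hr, div_le_div_iff₀ hB hC]
      nlinarith
    have h3 : ω * (Ig ω φ (p + 2) / Ig ω φ (p + 1))
        = (p + 1) + φ * (Ig ω φ p / Ig ω φ (p + 1)) := by
      field_simp
      linear_combination hrec
    have h4 : Ig ω φ p / Ig ω φ (p + 1) = 1 / r := by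
      rw [hr]; field_simp
    have h5 : ω * r ≤ ω * (Ig ω φ (p + 2) / Ig ω φ (p + 1)) :=
      mul_le_mul_of_nonneg_left hmono hω.le
    rw [h3, h4] at h5
    have h6 := mul_le_mul_of_nonneg_right h5 hrpos.le
    have e : ((p + 1) + φ * (1 / r)) * r = (p + 1) * r + φ := by
      field_simp
    nlinarith [h6, e]
  rcases le_or_gt (2 * ω * r - (p + 1)) 0 with h | h
  · rw [le_div_iff₀ (by positivity)]
    nlinarith [Real.sqrt_nonneg ((p + 1) ^ 2 + 4 * ω * φ)]
  · have hsq2 : (2 * ω * r - (p + 1)) ^ 2 ≤ (p + 1) ^ 2 + 4 * ω * φ := by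
      nlinarith [mul_nonneg hω.le (show (0:ℝ) ≤ (p + 1) * r + φ - ω * r ^ 2 by linarith)]
    have hsqrt : 2 * ω * r - (p + 1) ≤ Real.sqrt ((p + 1) ^ 2 + 4 * ω * φ) := by
      calc 2 * ω * r - (p + 1) = Real.sqrt ((2 * ω * r - (p + 1)) ^ 2) :=
            (Real.sqrt_sq h.le).symm
        _ ≤ Real.sqrt ((p + 1) ^ 2 + 4 * ω * φ) := Real.sqrt_le_sqrt hsq2
    rw [le_div_iff₀ (by positivity)]
    nlinarith [hsqrt]
lemma besselK_eq_Ig {ω φ : ℝ} (hω : 0 < ω) (hφ : 0 < φ) (q : ℝ) :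
    besselK q (2 * Real.sqrt (ω * φ)) = (1 / 2) * Real.sqrt (ω / φ) ^ q * Ig ω φ q := by
  set c : ℝ := Real.sqrt (ω / φ) with hc
  have hc0 : 0 < c := Real.sqrt_pos.mpr (div_pos hω hφ)
  have hc2 : c ^ 2 = ω / φ := Real.sq_sqrt (div_pos hω hφ).le
  have hs : Real.sqrt (ω * φ) = φ * c := by
    rw [show ω * φ = φ ^ 2 * (ω / φ) by field_simp,
      Real.sqrt_mul (by positivity) _, Real.sqrt_sq hφ.le, hc]
  have hφc2 : φ * c ^ 2 = ω := by rw [hc2]; field_simp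
  -- rewrite the integrand
  have step1 : besselK q (2 * Real.sqrt (ω * φ))
      = (1 / 2) * ∫ u in Set.Ioi (0:ℝ),
          u ^ (q - 1) * Real.exp (-(Real.sqrt (ω * φ) * u) - Real.sqrt (ω * φ) / u) := by
    rw [besselK]
    congr 1
    refine setIntegral_congr_fun measurableSet_Ioi (fun u hu => ?_)
    congr 1
    have hu0 : (0:ℝ) < u := hu
    field_simp
    ring
  -- change of variables u = c * x
  have step2 : (∫ u in Set.Ioi (0:ℝ),
        u ^ (q - 1) * Real.exp (-(Real.sqrt (ω * φ) * u) - Real.sqrt (ω * φ) / u))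
      = c * ∫ x in Set.Ioi (0:ℝ),
          (c * x) ^ (q - 1) * Real.exp (-(Real.sqrt (ω * φ) * (c * x))
            - Real.sqrt (ω * φ) / (c * x)) := by
    have := MeasureTheory.integral_comp_mul_left_Ioi
      (g := fun u : ℝ => u ^ (q - 1) * Real.exp (-(Real.sqrt (ω * φ) * u)
        - Real.sqrt (ω * φ) / u)) 0 hc0
    rw [mul_zero] at this
    rw [this, smul_eq_mul, ← mul_assoc, mul_inv_cancel₀ hc0.ne', one_mul]
  have step3 : (∫ x in Set.Ioi (0:ℝ),
        (c * x) ^ (q - 1) * Real.exp (-(Real.sqrt (ω * φ) * (c * x))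
          - Real.sqrt (ω * φ) / (c * x)))
      = c ^ (q - 1) * Ig ω φ q := by
    rw [Ig, ← MeasureTheory.integral_const_mul]
    refine setIntegral_congr_fun measurableSet_Ioi (fun x hx => ?_)
    have hx0 : (0:ℝ) < x := hx
    rw [Real.mul_rpow hc0.le hx0.le]
    have e1 : -(Real.sqrt (ω * φ) * (c * x)) - Real.sqrt (ω * φ) / (c * x)
        = -(ω * x) - φ / x := by
      rw [hs]
      have : φ * c * (c * x) = ω * x := by
        calc φ * c * (c * x) = (φ * c ^ 2) * x := by ring
          _ = ω * x := by rw [hφc2]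
      rw [this]
      congr 1
      rw [mul_comm φ c, mul_div_mul_left φ x hc0.ne']
    rw [e1]
    ring
  rw [step1, step2, step3]
  have : c * (c ^ (q - 1) * Ig ω φ q) = c ^ q * Ig ω φ q := by
    rw [← mul_assoc]
    congr 1
    rw [show q = 1 + (q - 1) by ring, Real.rpow_add hc0, Real.rpow_one]
    rw [show 1 + (q - 1) - 1 = q - 1 by ring]
  rw [this]
  ring

lemma posterior_eq_Ig_ratio {ω φ : ℝ} (hω : 0 < ω) (hφ : 0 < φ) (q : ℝ) :
    Real.sqrt (φ / ω) * besselR q (2 * Real.sqrt (ω * φ))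
      = Ig ω φ (q + 1) / Ig ω φ q := by
  have hc0 : 0 < Real.sqrt (ω / φ) := Real.sqrt_pos.mpr (div_pos hω hφ)
  have hd0 : 0 < Real.sqrt (φ / ω) := Real.sqrt_pos.mpr (div_pos hφ hω)
  have hcancel : Real.sqrt (φ / ω) * Real.sqrt (ω / φ) = 1 := by
    rw [← Real.sqrt_mul (by positivity)]
    rw [show φ / ω * (ω / φ) = 1 by field_simp]
    exact Real.sqrt_one
  rw [besselR, besselK_eq_Ig hω hφ (q + 1), besselK_eq_Ig hω hφ q]
  have hIq : Ig ω φ q ≠ 0 := (Ig_pos hω hφ q).ne'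
  have hcq : Real.sqrt (ω / φ) ^ q ≠ 0 := (Real.rpow_pos_of_pos hc0 q).ne'
  have hpow : Real.sqrt (ω / φ) ^ (q + 1) = Real.sqrt (ω / φ) ^ q * Real.sqrt (ω / φ) := by
    rw [Real.rpow_add hc0, Real.rpow_one]
  rw [hpow]
  field_simp
  ring_nf
  simp only [← div_eq_mul_inv, hcancel, one_mul]
lemma tendsto_L {ω lam ξ : ℝ} (hω : 0 < ω) (hlam : 0 < lam) (hξ : 0 < ξ)
    (a b : ℕ → ℝ)
    (ha : Filter.Tendsto (fun M : ℕ => a M / M) Filter.atTop (nhds (-ξ)))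
    (hb : Filter.Tendsto (fun M : ℕ => b M / M) Filter.atTop (nhds (ξ * lam))) :
    Filter.Tendsto (fun M : ℕ => (a M + Real.sqrt ((a M) ^ 2 + 4 * ω * (b M))) / (2 * ω))
      Filter.atTop (nhds lam) := by
  have h1M : Filter.Tendsto (fun M : ℕ => (1:ℝ) / M) Filter.atTop (nhds 0) :=
    tendsto_one_div_atTop_nhds_zero_nat
  have T : Filter.Tendsto (fun M : ℕ => (a M / M) ^ 2 + 4 * ω * (b M / M) * (1 / M))
      Filter.atTop (nhds (ξ ^ 2)) := by
    have := (ha.pow 2).add (((hb.const_mul (4 * ω)).mul h1M))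
    simpa [neg_sq] using this
  have hsq : Filter.Tendsto
      (fun M : ℕ => Real.sqrt ((a M / M) ^ 2 + 4 * ω * (b M / M) * (1 / M)))
      Filter.atTop (nhds ξ) := by
    have := T.sqrt
    rwa [Real.sqrt_sq hξ.le] at this
  have hden : Filter.Tendsto
      (fun M : ℕ => Real.sqrt ((a M / M) ^ 2 + 4 * ω * (b M / M) * (1 / M)) - a M / M)
      Filter.atTop (nhds (2 * ξ)) := by
    have := hsq.sub ha
    rwa [sub_neg_eq_add, show ξ + ξ = 2 * ξ by ring] at this
  have hnum : Filter.Tendsto (fun M : ℕ => 2 * (b M / M)) Filter.atTop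
      (nhds (2 * (ξ * lam))) := hb.const_mul 2
  have hratio := hnum.div hden (by positivity : (2:ℝ) * ξ ≠ 0)
  rw [show 2 * (ξ * lam) / (2 * ξ) = lam by field_simp] at hratio
  -- eventual equality
  have hbpos : ∀ᶠ M : ℕ in Filter.atTop, 0 < b M := by
    have h1 : ∀ᶠ M : ℕ in Filter.atTop, ξ * lam / 2 < b M / M :=
      hb.eventually (eventually_gt_nhds (by nlinarith))
    filter_upwards [h1, Filter.eventually_ge_atTop 1] with M h hM1
    have hM0 : (0:ℝ) < M := by exact_mod_cast hM1
    have hdiv : 0 < b M / M := lt_trans (by positivity) h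
    rcases div_pos_iff.mp hdiv with ⟨h2, _⟩ | ⟨_, h3⟩
    · exact h2
    · linarith
  refine hratio.congr' ?_
  filter_upwards [hbpos, Filter.eventually_ge_atTop 1] with M hbM hM1
  have hM0 : (0:ℝ) < M := by exact_mod_cast hM1
  set D : ℝ := (a M) ^ 2 + 4 * ω * b M with hD
  have hDpos : 0 < D := by nlinarith [sq_nonneg (a M)]
  have e1 : (a M / M) ^ 2 + 4 * ω * (b M / M) * (1 / M) = D / (M:ℝ) ^ 2 := by
    rw [hD]; field_simp
  have e2 : Real.sqrt (D / (M:ℝ) ^ 2) = Real.sqrt D / M := by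
    rw [Real.sqrt_div hDpos.le, Real.sqrt_sq hM0.le]
  have hgt : a M < Real.sqrt D := by
    have h1 : (a M) ^ 2 < D := by nlinarith
    calc a M ≤ |a M| := le_abs_self _
      _ = Real.sqrt ((a M) ^ 2) := (Real.sqrt_sq_eq_abs _).symm
      _ < Real.sqrt D := Real.sqrt_lt_sqrt (sq_nonneg _) h1
  have hs' : Real.sqrt D ^ 2 = a M ^ 2 + 4 * ω * b M := by
    rw [Real.sq_sqrt hDpos.le]
  have hden_pos : 0 < Real.sqrt D / M - a M / M := by
    rw [div_sub_div_same]
    exact div_pos (sub_pos.mpr hgt) hM0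
  simp only [Pi.div_apply]
  rw [e1, e2]
  rw [div_eq_div_iff hden_pos.ne' (by positivity : (0:ℝ) < 2 * ω).ne']
  linear_combination (-(1:ℝ) / M) * hs'
open ProbabilityTheory in
lemma gamma_int_and_mean {ξ lam : ℝ} (hξ : 0 < ξ) (hlam : 0 < lam) :
    MeasureTheory.Integrable id (gammaMeasure ξ (ξ / lam))
      ∧ (∫ x, x ∂(gammaMeasure ξ (ξ / lam))) = lam := by
  set r : ℝ := ξ / lam with hrdef
  have hr : 0 < r := div_pos hξ hlam
  have hΓ : 0 < Real.Gamma ξ := Real.Gamma_pos_of_pos hξ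
  -- integrability of x * pdf over volume
  have hbase : IntegrableOn (fun x : ℝ => x ^ ξ * Real.exp (-r * x)) (Set.Ioi 0) := by
    have := integrableOn_rpow_mul_exp_neg_mul_rpow (p := 1) (s := ξ) (b := r)
      (by linarith) zero_lt_one hr
    simpa [Real.rpow_one] using this
  have hEq : Set.EqOn (fun x : ℝ => (r ^ ξ / Real.Gamma ξ) * (x ^ ξ * Real.exp (-r * x)))
      (fun x : ℝ => x * gammaPDFReal ξ r x) (Set.Ioi 0) := by
    intro x hx
    have hx0 : (0:ℝ) < x := hx
    simp only [gammaPDFReal, if_pos hx0.le]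
    have : x * x ^ (ξ - 1) = x ^ ξ := by
      nth_rewrite 1 [← Real.rpow_one x]
      rw [← Real.rpow_add hx0]
      norm_num
    rw [neg_mul]
    linear_combination (-(r ^ ξ / Real.Gamma ξ) * Real.exp (-(r * x))) * this
  have hIoi : IntegrableOn (fun x : ℝ => x * gammaPDFReal ξ r x) (Set.Ioi 0) :=
    MeasureTheory.IntegrableOn.congr_fun (hbase.const_mul _) hEq measurableSet_Ioi
  have hEq0 : Set.EqOn (fun _ : ℝ => (0:ℝ)) (fun x : ℝ => x * gammaPDFReal ξ r x)
      (Set.Iic 0) := by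
    intro x hx
    rcases lt_or_eq_of_le (Set.mem_Iic.mp hx) with h | h
    · simp [gammaPDFReal, not_le.mpr h]
    · simp [h]
  have hIic : IntegrableOn (fun x : ℝ => x * gammaPDFReal ξ r x) (Set.Iic 0) :=
    MeasureTheory.IntegrableOn.congr_fun integrableOn_zero hEq0 measurableSet_Iic
  have hInt : MeasureTheory.Integrable (fun x : ℝ => x * gammaPDFReal ξ r x) := by
    rw [← MeasureTheory.integrableOn_univ, ← Set.Iic_union_Ioi (a := (0:ℝ))]
    exact hIic.union hIoi
  -- transfer to gammaMeasure
  have hmeaspdf : Measurable (gammaPDF ξ r) :=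
    (measurable_gammaPDFReal ξ r).ennreal_ofReal
  have hid : MeasureTheory.Integrable id (gammaMeasure ξ r) := by
    rw [gammaMeasure, MeasureTheory.integrable_withDensity_iff hmeaspdf
      (ae_of_all _ (fun x => ENNReal.ofReal_lt_top))]
    refine hInt.congr (ae_of_all _ (fun x => ?_))
    simp [gammaPDF, ENNReal.toReal_ofReal (gammaPDFReal_nonneg hξ hr x)]
  refine ⟨hid, ?_⟩
  -- compute the integral
  have hmeq : gammaMeasure ξ r
      = MeasureTheory.Measure.withDensity volume
          (fun x => ((gammaPDFReal ξ r x).toNNReal : ENNReal)) := rfl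
  have h1 : (∫ x, x ∂(gammaMeasure ξ r))
      = ∫ x, gammaPDFReal ξ r x * x := by
    rw [hmeq, integral_withDensity_eq_integral_smul
      ((measurable_gammaPDFReal ξ r).real_toNNReal) (fun x => x)]
    refine MeasureTheory.integral_congr_ae (ae_of_all _ (fun x => ?_))
    simp [NNReal.smul_def, Real.coe_toNNReal _ (gammaPDFReal_nonneg hξ hr x)]
  rw [h1]
  have hInt' : MeasureTheory.Integrable (fun x : ℝ => gammaPDFReal ξ r x * x) := by
    refine hInt.congr (ae_of_all _ (fun x => ?_))
    simp [mul_comm]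
  have hsplit : (∫ x, gammaPDFReal ξ r x * x)
      = (∫ x in Set.Ioi (0:ℝ), gammaPDFReal ξ r x * x)
        + ∫ x in Set.Iic (0:ℝ), gammaPDFReal ξ r x * x := by
    rw [← MeasureTheory.integral_add_compl measurableSet_Ioi hInt', Set.compl_Ioi]
  rw [hsplit]
  have hzero : (∫ x in Set.Iic (0:ℝ), gammaPDFReal ξ r x * x) = 0 := by
    rw [setIntegral_congr_fun measurableSet_Iic
      (fun x hx => (by
        have := hEq0 hx
        simp only at this ⊢
        rw [mul_comm]
        exact this.symm : gammaPDFReal ξ r x * x = (0:ℝ)))]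
    simp
  rw [hzero, add_zero]
  have hval : (∫ x in Set.Ioi (0:ℝ), gammaPDFReal ξ r x * x)
      = (r ^ ξ / Real.Gamma ξ) * ∫ x in Set.Ioi (0:ℝ), x ^ ξ * Real.exp (-r * x) := by
    rw [← MeasureTheory.integral_const_mul]
    refine setIntegral_congr_fun measurableSet_Ioi (fun x hx => ?_)
    have := hEq hx
    simp only at this
    rw [mul_comm]
    exact this.symm
  rw [hval]
  have hIval : (∫ x in Set.Ioi (0:ℝ), x ^ ξ * Real.exp (-r * x))
      = r ^ (-(ξ + 1)) * Real.Gamma (ξ + 1) := by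
    have := integral_rpow_mul_exp_neg_mul_rpow (p := 1) (q := ξ) (b := r)
      zero_lt_one (by linarith) hr
    simp only [Real.rpow_one, div_one, one_div, mul_one] at this
    rw [← this]
  rw [hIval, Real.Gamma_add_one hξ.ne']
  have hrp : r ^ ξ * r ^ (-(ξ + 1)) = r⁻¹ := by
    rw [← Real.rpow_add hr, show ξ + -(ξ + 1) = -1 by ring, Real.rpow_neg_one]
  calc r ^ ξ / Real.Gamma ξ * (r ^ (-(ξ + 1)) * (ξ * Real.Gamma ξ))
      = (r ^ ξ * r ^ (-(ξ + 1))) * ξ * (Real.Gamma ξ / Real.Gamma ξ) := by ring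
    _ = r⁻¹ * ξ * 1 := by rw [hrp, div_self hΓ.ne']
    _ = lam := by rw [hrdef]; field_simp

/-- **Theorem 2c: consistency as the number of experts grows.**
If the expert opinions are i.i.d. Gamma with shape `ξ` and scale `λ/ξ` (i.e. rate `ξ/λ`),
then almost surely the posterior mean `√(φ_M/ω) R_{ν_M+1}(2√(ω φ_M))` of the Poisson
intensity converges to `λ` as `M → ∞`. -/
theorem posterior_mean_tendsto_of_many_experts
    {Ω : Type*} [MeasurableSpace Ω] (μ : Measure Ω) [IsProbabilityMeasure μ]
    (lam ξ α₀ β₀ V : ℝ) (hlam : 0 < lam) (hξ : 0 < ξ) (hα₀ : 0 < α₀) (hβ₀ : 0 < β₀)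
    (hV : 0 < V) (K : ℕ) (n : Fin K → ℕ)
    (s ω : ℝ) (hs : s = ∑ k, (n k : ℝ)) (hω : ω = V * K + 1 / β₀)
    (θ : ℕ → Ω → ℝ) (hmeas : ∀ m, Measurable (θ m))
    (hindep : iIndepFun θ μ)
    (hdist : ∀ m, μ.map (θ m) = gammaMeasure ξ (ξ / lam)) :
    ∀ᵐ x ∂μ, Tendsto (fun M : ℕ =>
        Real.sqrt ((ξ * ∑ m ∈ Finset.range M, θ m x) / ω) *
          besselR ((α₀ - 1 - M * ξ + s) + 1)
            (2 * Real.sqrt (ω * (ξ * ∑ m ∈ Finset.range M, θ m x))))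
      atTop (nhds lam) := by
  have hω0 : 0 < ω := by
    rw [hω]
    have : (0:ℝ) ≤ V * K := by positivity
    have : (0:ℝ) < 1 / β₀ := by positivity
    linarith
  -- strong law of large numbers
  have hgam := gamma_int_and_mean hξ hlam
  have hint : MeasureTheory.Integrable (θ 0) μ := by
    have h := hgam.1
    rw [← hdist 0] at h
    exact (MeasureTheory.integrable_map_measure aestronglyMeasurable_id
      (hmeas 0).aemeasurable).mp h
  have hident : ∀ i, ProbabilityTheory.IdentDistrib (θ i) (θ 0) μ μ := fun i =>
    ⟨(hmeas i).aemeasurable, (hmeas 0).aemeasurable, by rw [hdist i, hdist 0]⟩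
  have hpair : Pairwise (Function.onFun (ProbabilityTheory.IndepFun · · μ) θ) :=
    fun i j hij => hindep.indepFun hij
  have hSL := ProbabilityTheory.strong_law_ae_real θ hint hpair hident
  have hmean : (∫ a, θ 0 a ∂μ) = lam := by
    have h := MeasureTheory.integral_map (μ := μ) (φ := θ 0) (f := id)
      (hmeas 0).aemeasurable aestronglyMeasurable_id
    rw [hdist 0] at h
    have h2 := hgam.2
    simp only [id] at h
    exact h.symm.trans h2
  rw [hmean] at hSL
  filter_upwards [hSL] with x hx
  -- sequences
  have hb : Filter.Tendsto (fun M : ℕ => (ξ * ∑ m ∈ Finset.range M, θ m x) / M)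
      Filter.atTop (nhds (ξ * lam)) := by
    refine (hx.const_mul ξ).congr (fun M => ?_)
    rw [mul_div_assoc]
  have ha : Filter.Tendsto (fun M : ℕ => ((α₀ - 1 - M * ξ + s) + 1) / M)
      Filter.atTop (nhds (-ξ)) := by
    have T : Filter.Tendsto (fun M : ℕ => (α₀ + s) * (1 / M) - ξ)
        Filter.atTop (nhds (-ξ)) := by
      have := (tendsto_one_div_atTop_nhds_zero_nat.const_mul (α₀ + s)).sub_const ξ
      simpa using this
    refine T.congr' ?_
    filter_upwards [Filter.eventually_ge_atTop 1] with M hM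
    have hM0 : ((M:ℝ)) ≠ 0 := by
      have : (0:ℝ) < M := by exact_mod_cast hM
      exact this.ne'
    field_simp
    ring
  have ha' : Filter.Tendsto (fun M : ℕ => (((α₀ - 1 - M * ξ + s) + 1) + 1) / M)
      Filter.atTop (nhds (-ξ)) := by
    have T : Filter.Tendsto (fun M : ℕ => (α₀ + s + 1) * (1 / M) - ξ)
        Filter.atTop (nhds (-ξ)) := by
      have := (tendsto_one_div_atTop_nhds_zero_nat.const_mul (α₀ + s + 1)).sub_const ξ
      simpa using this
    refine T.congr' ?_
    filter_upwards [Filter.eventually_ge_atTop 1] with M hM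
    have hM0 : ((M:ℝ)) ≠ 0 := by
      have : (0:ℝ) < M := by exact_mod_cast hM
      exact this.ne'
    field_simp
    ring
  have hLo := tendsto_L hω0 hlam hξ (fun M : ℕ => (α₀ - 1 - M * ξ + s) + 1)
    (fun M : ℕ => ξ * ∑ m ∈ Finset.range M, θ m x) ha hb
  have hHi := tendsto_L hω0 hlam hξ (fun M : ℕ => ((α₀ - 1 - M * ξ + s) + 1) + 1)
    (fun M : ℕ => ξ * ∑ m ∈ Finset.range M, θ m x) ha' hb
  -- positivity of φ eventually
  have hbpos : ∀ᶠ M : ℕ in Filter.atTop, 0 < ξ * ∑ m ∈ Finset.range M, θ m x := by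
    have h1 : ∀ᶠ M : ℕ in Filter.atTop,
        ξ * lam / 2 < (ξ * ∑ m ∈ Finset.range M, θ m x) / M :=
      hb.eventually (eventually_gt_nhds (by nlinarith))
    filter_upwards [h1, Filter.eventually_ge_atTop 1] with M h hM1
    have hM0 : (0:ℝ) < M := by exact_mod_cast hM1
    have hdiv : 0 < (ξ * ∑ m ∈ Finset.range M, θ m x) / M := lt_trans (by positivity) h
    rcases div_pos_iff.mp hdiv with ⟨h2, _⟩ | ⟨_, h3⟩
    · exact h2
    · linarith
  refine tendsto_of_tendsto_of_tendsto_of_le_of_le' hLo hHi ?_ ?_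
  · filter_upwards [hbpos] with M hφM
    have heq := posterior_eq_Ig_ratio hω0 hφM ((α₀ - 1 - M * ξ + s) + 1)
    rw [heq]
    exact Ig_ratio_lower hω0 hφM _
  · filter_upwards [hbpos] with M hφM
    have heq := posterior_eq_Ig_ratio hω0 hφM ((α₀ - 1 - M * ξ + s) + 1)
    rw [heq]
    exact Ig_ratio_upper hω0 hφM _
end

section
/- Fix α₀ > 0, β₀ > 0, V > 0, integers K ≥ 1 and M ≥ 1, counts n₁,…,n_K ∈ ℕ with s = Σ_{k=1}^K n_k, a value θ̄ > 0, and set ω = VK + 1/β₀. Then lim_{ξ→0⁺} √(ξMθ̄/ω) · R_{α₀ − Mξ + s}(2√(ω ξ M θ̄)) = (α₀ + s)β₀/(VKβ₀ + 1), and this limit equals the credibility mixture (1/(VKβ₀+1))·α₀β₀ + (1 − 1/(VKβ₀+1))·(s/K)/V of the prior mean α₀β₀ and the maximum likelihood estimate (s/K)/V. -/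
open MeasureTheory ProbabilityTheory Filter

namespace BesselAux

/-- `J p ε = ∫₀^∞ x^p e^{-x - ε/x} dx`. -/
noncomputable def J (p ε : ℝ) : ℝ :=
  ∫ x in Set.Ioi (0:ℝ), x ^ p * Real.exp (-x - ε / x)

lemma rpow_le_add {x c p d : ℝ} (hx : 0 < x) (hcp : c ≤ p) (hpd : p ≤ d) :
    x ^ p ≤ x ^ c + x ^ d := by
  rcases le_total x 1 with h | h
  · have h1 : x ^ p ≤ x ^ c := Real.rpow_le_rpow_of_exponent_ge hx h hcp
    have h2 : (0:ℝ) ≤ x ^ d := Real.rpow_nonneg hx.le d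
    linarith
  · have h1 : x ^ p ≤ x ^ d := Real.rpow_le_rpow_of_exponent_le h hpd
    have h2 : (0:ℝ) ≤ x ^ c := Real.rpow_nonneg hx.le c
    linarith

lemma integrable_aux {p : ℝ} (hp : -1 < p) :
    IntegrableOn (fun x : ℝ => x ^ p * Real.exp (-x)) (Set.Ioi 0) := by
  have h := Real.GammaIntegral_convergent (show 0 < p + 1 by linarith)
  have e : (fun x : ℝ => Real.exp (-x) * x ^ (p + 1 - 1)) =
      fun x : ℝ => x ^ p * Real.exp (-x) := by
    ext x; rw [add_sub_cancel_right, mul_comm]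
  rwa [e] at h

lemma contOn {p ε : ℝ} :
    ContinuousOn (fun x : ℝ => x ^ p * Real.exp (-x - ε / x)) (Set.Ioi 0) := by
  apply ContinuousOn.mul
  · exact ContinuousOn.rpow_const continuousOn_id fun x hx => Or.inl (ne_of_gt hx)
  · apply Real.continuous_exp.comp_continuousOn
    exact (continuousOn_id.neg).sub
      (continuousOn_const.div continuousOn_id fun x hx => ne_of_gt hx)

lemma integrableJ {p ε : ℝ} (hp : -1 < p) (hε : 0 ≤ ε) :
    IntegrableOn (fun x : ℝ => x ^ p * Real.exp (-x - ε / x)) (Set.Ioi 0) := by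
  refine (integrable_aux hp).mono' (contOn.aestronglyMeasurable measurableSet_Ioi) ?_
  filter_upwards [ae_restrict_mem measurableSet_Ioi] with x hx
  have hx0 : (0:ℝ) < x := hx
  rw [Real.norm_eq_abs, abs_of_nonneg (by positivity)]
  have h1 : Real.exp (-x - ε / x) ≤ Real.exp (-x) := by
    apply Real.exp_le_exp.mpr
    have : 0 ≤ ε / x := div_nonneg hε hx0.le
    linarith
  exact mul_le_mul_of_nonneg_left h1 (Real.rpow_nonneg hx0.le p)

lemma J_pos {p ε : ℝ} (hp : -1 < p) (hε : 0 ≤ ε) : 0 < J p ε := by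
  rw [J, setIntegral_pos_iff_support_of_nonneg_ae ?_ (integrableJ hp hε)]
  · refine lt_of_lt_of_le ?_ (measure_mono (show Set.Ioi (0:ℝ) ⊆ _ from ?_))
    · rw [Real.volume_Ioi]; exact ENNReal.zero_lt_top
    · intro x hx
      have hx0 : (0:ℝ) < x := hx
      refine ⟨?_, hx⟩
      have : 0 < x ^ p * Real.exp (-x - ε / x) := by positivity
      exact Function.mem_support.mpr this.ne'
  · filter_upwards [ae_restrict_mem measurableSet_Ioi] with x hx
    have hx0 : (0:ℝ) < x := hx
    positivity

lemma besselK_eq_s8 {ν ε : ℝ} (hε : 0 < ε) :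
    besselK ν (2 * Real.sqrt ε) = (1/2) * ((Real.sqrt ε)⁻¹) ^ ν * J (ν - 1) ε := by
  have hsε : 0 < Real.sqrt ε := Real.sqrt_pos.mpr hε
  have hb : 0 < (Real.sqrt ε)⁻¹ := by positivity
  have key := integral_comp_mul_left_Ioi
      (fun u : ℝ => u ^ (ν - 1) * Real.exp (-(2 * Real.sqrt ε * (u + 1 / u)) / 2)) 0 hb
  rw [mul_zero, inv_inv, smul_eq_mul] at key
  have key2 : (∫ u in Set.Ioi (0:ℝ), u ^ (ν - 1) * Real.exp (-(2 * Real.sqrt ε * (u + 1 / u)) / 2))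
      = (Real.sqrt ε)⁻¹ * ∫ x in Set.Ioi (0:ℝ),
        ((Real.sqrt ε)⁻¹ * x) ^ (ν - 1) *
          Real.exp (-(2 * Real.sqrt ε * ((Real.sqrt ε)⁻¹ * x + 1 / ((Real.sqrt ε)⁻¹ * x))) / 2) := by
    rw [key, ← mul_assoc, inv_mul_cancel₀ hsε.ne', one_mul]
  have hptwise : ∀ x ∈ Set.Ioi (0:ℝ),
      ((Real.sqrt ε)⁻¹ * x) ^ (ν - 1) *
        Real.exp (-(2 * Real.sqrt ε * ((Real.sqrt ε)⁻¹ * x + 1 / ((Real.sqrt ε)⁻¹ * x))) / 2)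
      = ((Real.sqrt ε)⁻¹) ^ (ν - 1) * (x ^ (ν - 1) * Real.exp (-x - ε / x)) := by
    intro x hx
    have hx0 : (0:ℝ) < x := hx
    have e1 : ((Real.sqrt ε)⁻¹ * x) ^ (ν - 1)
        = ((Real.sqrt ε)⁻¹) ^ (ν - 1) * x ^ (ν - 1) :=
      Real.mul_rpow hb.le hx0.le
    have e2 : -(2 * Real.sqrt ε * ((Real.sqrt ε)⁻¹ * x + 1 / ((Real.sqrt ε)⁻¹ * x))) / 2
        = -x - ε / x := by
      have hss : Real.sqrt ε * Real.sqrt ε = ε := Real.mul_self_sqrt hε.le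
      field_simp
      nlinarith [hss]
    rw [e1, e2]; ring
  rw [besselK, key2, setIntegral_congr_fun measurableSet_Ioi hptwise, integral_const_mul]
  have e3 : ((Real.sqrt ε)⁻¹) ^ ν = ((Real.sqrt ε)⁻¹) ^ (ν - 1) * (Real.sqrt ε)⁻¹ := by
    rw [show ν = (ν - 1) + 1 by ring, Real.rpow_add_one (ne_of_gt hb)]
    ring_nf
  rw [J, e3]; ring

lemma tendsto_J {l : Filter ℝ} [l.IsCountablyGenerated] {p e : ℝ → ℝ} {p₀ c d : ℝ}
    (hc : -1 < c) (hcd : c ≤ d) (hp₀ : 0 < p₀ + 1)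
    (hp : Tendsto p l (nhds p₀)) (he : Tendsto e l (nhds 0))
    (hmem : ∀ᶠ ξ in l, p ξ ∈ Set.Icc c d ∧ 0 ≤ e ξ) :
    Tendsto (fun ξ => J (p ξ) (e ξ)) l (nhds (Real.Gamma (p₀ + 1))) := by
  have hd : -1 < d := lt_of_lt_of_le hc hcd
  have hΓ : Real.Gamma (p₀ + 1) = ∫ x in Set.Ioi (0:ℝ), x ^ p₀ * Real.exp (-x) := by
    rw [Real.Gamma_eq_integral hp₀]
    congr 1; ext x; rw [add_sub_cancel_right, mul_comm]
  rw [hΓ]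
  simp only [J]
  apply tendsto_integral_filter_of_dominated_convergence
      (fun x => x ^ c * Real.exp (-x) + x ^ d * Real.exp (-x))
  · filter_upwards with ξ
    exact contOn.aestronglyMeasurable measurableSet_Ioi
  · filter_upwards [hmem] with ξ hξ
    obtain ⟨⟨hc', hd'⟩, he0⟩ := hξ
    filter_upwards [ae_restrict_mem measurableSet_Ioi] with x hx
    have hx0 : (0:ℝ) < x := hx
    rw [Real.norm_eq_abs, abs_of_nonneg (by positivity)]
    calc x ^ p ξ * Real.exp (-x - e ξ / x)
        ≤ x ^ p ξ * Real.exp (-x) := by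
          apply mul_le_mul_of_nonneg_left ?_ (Real.rpow_nonneg hx0.le _)
          apply Real.exp_le_exp.mpr
          have : 0 ≤ e ξ / x := div_nonneg he0 hx0.le
          linarith
      _ ≤ (x ^ c + x ^ d) * Real.exp (-x) :=
          mul_le_mul_of_nonneg_right (rpow_le_add hx0 hc' hd') (Real.exp_nonneg _)
      _ = x ^ c * Real.exp (-x) + x ^ d * Real.exp (-x) := by ring
  · exact (integrable_aux hc).add (integrable_aux hd)
  · filter_upwards [ae_restrict_mem measurableSet_Ioi] with x hx
    have hx0 : (0:ℝ) < x := hx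
    have h1 : Tendsto (fun ξ => x ^ p ξ) l (nhds (x ^ p₀)) := by
      have hcont : Continuous fun q : ℝ => x ^ q := by
        have e : (fun q : ℝ => x ^ q) = fun q => Real.exp (Real.log x * q) := by
          ext q; rw [Real.rpow_def_of_pos hx0]
        rw [e]
        exact Real.continuous_exp.comp (continuous_const.mul continuous_id)
      exact (hcont.continuousAt.tendsto).comp hp
    have h2 : Tendsto (fun ξ => Real.exp (-x - e ξ / x)) l (nhds (Real.exp (-x))) := by
      have hcont : Continuous fun t : ℝ => Real.exp (-x - t / x) :=
        Real.continuous_exp.comp (continuous_const.sub (continuous_id.div_const x))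
      have h := (hcont.continuousAt.tendsto).comp he
      simpa [Function.comp_def] using h
    exact h1.mul h2

end BesselAux

open BesselAux

set_option maxHeartbeats 1000000 in
/-- **Theorem 2d: non-informative experts.**
As `ξ → 0⁺` (i.e. the coefficient of variation `1/√ξ` of the expert opinions tends to ∞),
the posterior mean of the Poisson intensity converges to `(α₀+s)β₀/(VKβ₀+1)`, which is the
credibility mixture of the prior mean `α₀β₀` and the maximum likelihood estimate `(s/K)/V`. -/
theorem posterior_mean_tendsto_of_noninformative_experts
    (α₀ β₀ V θbar : ℝ) (hα₀ : 0 < α₀) (hβ₀ : 0 < β₀) (hV : 0 < V) (hθbar : 0 < θbar)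
    (K M : ℕ) (hK : 1 ≤ K) (hM : 1 ≤ M) (n : Fin K → ℕ)
    (s ω : ℝ) (hs : s = ∑ k, (n k : ℝ)) (hω : ω = V * K + 1 / β₀) :
    Tendsto (fun ξ : ℝ =>
        Real.sqrt (ξ * M * θbar / ω) *
          besselR (α₀ - M * ξ + s) (2 * Real.sqrt (ω * (ξ * M * θbar))))
      (nhdsWithin 0 (Set.Ioi 0)) (nhds ((α₀ + s) * β₀ / (V * K * β₀ + 1))) ∧
    (α₀ + s) * β₀ / (V * K * β₀ + 1) =
      (1 / (V * K * β₀ + 1)) * (α₀ * β₀) +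
        (1 - 1 / (V * K * β₀ + 1)) * ((s / K) / V) := by
  have hK0 : (0:ℝ) < K := by exact_mod_cast hK
  have hM0 : (0:ℝ) < M := by exact_mod_cast hM
  have hs0 : 0 ≤ s := by
    rw [hs]; positivity
  have hω0 : 0 < ω := by rw [hω]; positivity
  have hD : (0:ℝ) < V * K * β₀ + 1 := by positivity
  set a : ℝ := α₀ + s with ha_def
  have ha : 0 < a := by positivity
  constructor
  · -- the limit statement
    have hL : (α₀ + s) * β₀ / (V * K * β₀ + 1) = (1/ω) * a := by
      rw [hω, ha_def]; field_simp
    rw [hL]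
    set l := nhdsWithin (0:ℝ) (Set.Ioi 0) with hl
    set δ : ℝ := min 1 (a / (2 * M)) with hδ_def
    have hδ : 0 < δ := lt_min one_pos (by positivity)
    have hmem : ∀ᶠ ξ in l, ξ ∈ Set.Ioo 0 δ :=
      Ioo_mem_nhdsGT_of_mem (Set.left_mem_Ico.mpr hδ)
    have hpν : Tendsto (fun ξ : ℝ => α₀ - M * ξ + s) l (nhds a) := by
      apply Tendsto.mono_left ?_ nhdsWithin_le_nhds
      have hc : Continuous fun ξ : ℝ => α₀ - (M:ℝ) * ξ + s := by continuity
      have h := hc.tendsto 0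
      simpa [ha_def] using h
    have heε : Tendsto (fun ξ : ℝ => ω * (ξ * M * θbar)) l (nhds 0) := by
      apply Tendsto.mono_left ?_ nhdsWithin_le_nhds
      have hc : Continuous fun ξ : ℝ => ω * (ξ * (M:ℝ) * θbar) := by continuity
      have h := hc.tendsto 0
      simpa using h
    have hbound : ∀ ξ ∈ Set.Ioo (0:ℝ) δ, a/2 ≤ α₀ - M * ξ + s ∧ α₀ - M * ξ + s ≤ a := by
      intro ξ hξ
      obtain ⟨h0, h1⟩ := hξ
      have h2 : ξ ≤ a / (2 * M) := le_of_lt (lt_of_lt_of_le h1 (min_le_right _ _))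
      have h3 : (M:ℝ) * ξ ≤ a / 2 := by
        have h4 : (M:ℝ) * ξ ≤ (M:ℝ) * (a / (2 * M)) := mul_le_mul_of_nonneg_left h2 hM0.le
        have h5 : (M:ℝ) * (a / (2 * M)) = a / 2 := by field_simp
        linarith
      constructor
      · simp only [ha_def]; nlinarith
      · simp only [ha_def]; nlinarith
    have hfacts1 : ∀ᶠ ξ in l, (α₀ - M * ξ + s ∈ Set.Icc (a/2) a ∧ 0 ≤ ω * (ξ * M * θbar)) := by
      filter_upwards [hmem] with ξ hξ
      exact ⟨Set.mem_Icc.mpr ⟨(hbound ξ hξ).1, (hbound ξ hξ).2⟩,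
        (mul_pos hω0 (mul_pos (mul_pos hξ.1 hM0) hθbar)).le⟩
    have hfacts2 : ∀ᶠ ξ in l,
        (α₀ - M * ξ + s - 1 ∈ Set.Icc (a/2 - 1) (a - 1) ∧ 0 ≤ ω * (ξ * M * θbar)) := by
      filter_upwards [hfacts1] with ξ hξ
      have h1 := (Set.mem_Icc.mp hξ.1).1
      have h2 := (Set.mem_Icc.mp hξ.1).2
      exact ⟨Set.mem_Icc.mpr ⟨by linarith, by linarith⟩, hξ.2⟩
    have hJ1 : Tendsto (fun ξ : ℝ => J (α₀ - M * ξ + s) (ω * (ξ * M * θbar))) l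
        (nhds (Real.Gamma (a + 1))) :=
      tendsto_J (c := a/2) (d := a) (p₀ := a) (by linarith) (by linarith) (by linarith) hpν heε hfacts1
    have hJ2 : Tendsto (fun ξ : ℝ => J (α₀ - M * ξ + s - 1) (ω * (ξ * M * θbar))) l
        (nhds (Real.Gamma ((a - 1) + 1))) :=
      tendsto_J (c := a/2 - 1) (d := a - 1) (by linarith) (by linarith) (by linarith)
        (hpν.sub_const 1) heε hfacts2
    rw [show (a - 1) + 1 = a by ring] at hJ2
    have hΓpos : 0 < Real.Gamma a := Real.Gamma_pos_of_pos ha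
    have hratio : Tendsto (fun ξ : ℝ =>
        J (α₀ - M * ξ + s) (ω * (ξ * M * θbar)) /
          J (α₀ - M * ξ + s - 1) (ω * (ξ * M * θbar))) l (nhds a) := by
      have h := hJ1.div hJ2 hΓpos.ne'
      rw [Real.Gamma_add_one ha.ne', mul_div_assoc, div_self hΓpos.ne', mul_one] at h
      exact h
    have hfinal : Tendsto (fun ξ : ℝ => (1/ω) *
        (J (α₀ - M * ξ + s) (ω * (ξ * M * θbar)) /
          J (α₀ - M * ξ + s - 1) (ω * (ξ * M * θbar)))) l (nhds ((1/ω) * a)) :=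
      tendsto_const_nhds.mul hratio
    apply Tendsto.congr' ?_ hfinal
    filter_upwards [hmem] with ξ hξ
    have hξ0 : 0 < ξ := hξ.1
    have hφ : 0 < ξ * M * θbar := by positivity
    have hε : 0 < ω * (ξ * M * θbar) := by positivity
    set ε : ℝ := ω * (ξ * M * θbar) with hε_def
    set ν : ℝ := α₀ - M * ξ + s with hν_def
    have hν : a/2 ≤ ν ∧ ν ≤ a := hbound ξ hξ
    have hsε : 0 < Real.sqrt ε := Real.sqrt_pos.mpr hε
    have hb : 0 < (Real.sqrt ε)⁻¹ := by positivity
    have hJd : 0 < J (ν - 1) ε := J_pos (by linarith [hν.1]) hε.le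
    have hbν : 0 < ((Real.sqrt ε)⁻¹) ^ ν := Real.rpow_pos_of_pos hb ν
    have hRR : besselR ν (2 * Real.sqrt ε) = (Real.sqrt ε)⁻¹ * (J ν ε / J (ν - 1) ε) := by
      rw [besselR, besselK_eq_s8 hε, besselK_eq_s8 hε, add_sub_cancel_right,
        Real.rpow_add_one (ne_of_gt hb)]
      field_simp
    have hsqrt : Real.sqrt (ξ * M * θbar / ω) * (Real.sqrt ε)⁻¹ = 1/ω := by
      have h1 : 0 < Real.sqrt ω := Real.sqrt_pos.mpr hω0
      have h2 : 0 < Real.sqrt (ξ * M * θbar) := Real.sqrt_pos.mpr hφ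
      have h3 : Real.sqrt ω * Real.sqrt ω = ω := Real.mul_self_sqrt hω0.le
      rw [hε_def, Real.sqrt_div hφ.le, Real.sqrt_mul hω0.le, mul_inv, one_div, ← h3]
      field_simp
      rw [Real.sq_sqrt (by positivity), Real.sq_sqrt hω0.le]
    rw [hRR, ← mul_assoc, hsqrt]
  · -- the algebraic identity
    have hKne : (K:ℝ) ≠ 0 := hK0.ne'
    field_simp
    ring
end
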